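/- arXiv:1906.02895 — 4 statements merged into one kernel-verified Lean document; each statement's English description precedes it below -/
import Mathlib

section
/- Let G be a finite simple graph with at least one edge. Then Eρ(G) < cd(G) ≤ (3/2)·mr(F₂,G) ≤ (3/2)·nd(G) ≤ (3/2)·2^{cd(G)}. -/
open scoped Classical

namespace AvgCutRank

variable {V : Type*} {W : Type*}

/-- Local complementation of `G` at a vertex `v`: complement the adjacency inside
the neighborhood of `v`. -/
def localComp (G : SimpleGraph V) (v : V) : SimpleGraph V where
  Adj x y := x ≠ y ∧ (G.Adj x y ↔ ¬(G.Adj v x ∧ G.Adj v y))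
  symm := ⟨by
    rintro x y ⟨hxy, h⟩
    refine ⟨hxy.symm, ?_⟩
    rw [G.adj_comm y x, and_comm]
    exact h⟩
  loopless := ⟨fun x h => h.1 rfl⟩

/-- Two graphs on the same vertex set are locally equivalent if one is obtained from
the other by a sequence of local complementations. -/
def LocallyEquivalent (G H : SimpleGraph V) : Prop :=
  Relation.ReflTransGen (fun A B => ∃ v, B = localComp A v) G H

/-- `H` is (isomorphic to) a vertex-minor of `G`: `H` is isomorphic to an induced
subgraph of a graph locally equivalent to `G`. -/
def IsVertexMinor (H : SimpleGraph W) (G : SimpleGraph V) : Prop :=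
  ∃ (G' : SimpleGraph V) (s : Set V), LocallyEquivalent G G' ∧ Nonempty (H ≃g G'.induce s)

/-- The cut-rank of a set `X` of vertices: the rank over GF(2) of the `X × Xᶜ`
adjacency submatrix. -/
noncomputable def cutRank [Fintype V] [DecidableEq V] (G : SimpleGraph V)
    (X : Finset V) : ℕ :=
  (Matrix.of fun (i : X) (j : (Xᶜ : Finset V)) =>
    if G.Adj i.1 j.1 then (1 : ZMod 2) else 0).rank

/-- The average cut-rank of a graph. -/
noncomputable def avgCutRank [Fintype V] [DecidableEq V] (G : SimpleGraph V) : ℝ :=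
  (∑ X : Finset V, (cutRank G X : ℝ)) / 2 ^ Fintype.card V

/-- The maximum cut-rank of a graph. -/
noncomputable def maxCutRank [Fintype V] [DecidableEq V] (G : SimpleGraph V) : ℕ :=
  Finset.univ.sup (cutRank G)

/-- `x` and `y` are equal or twins: they have the same neighbors outside `{x, y}`. -/
def TwinEq (G : SimpleGraph V) (x y : V) : Prop :=
  x = y ∨ ∀ z, z ≠ x → z ≠ y → (G.Adj x z ↔ G.Adj y z)

/-- `x` and `y` are twins. -/
def IsTwins (G : SimpleGraph V) (x y : V) : Prop :=
  x ≠ y ∧ ∀ z, z ≠ x → z ≠ y → (G.Adj x z ↔ G.Adj y z)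

/-- Neighborhood diversity: the number of twin classes. -/
noncomputable def nd [Fintype V] [DecidableEq V] (G : SimpleGraph V) : ℕ :=
  (Finset.univ.image fun x => Finset.univ.filter fun y => TwinEq G x y).card

/-- The minimum rank of a graph over a field `F`. -/
noncomputable def minRank (F : Type*) [Field F] [Fintype V] [DecidableEq V]
    (G : SimpleGraph V) : ℕ :=
  sInf { r : ℕ | ∃ A : Matrix V V F, A.IsSymm ∧
    (∀ i j, i ≠ j → (A i j ≠ 0 ↔ G.Adj i j)) ∧ A.rank = r }

/-- The clique delta-cover number: the minimum `t` such that the edge set of `G` is the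
symmetric difference of the edge sets of `t` complete graphs (given by their vertex sets). -/
noncomputable def cliqueDeltaCover [Fintype V] [DecidableEq V] (G : SimpleGraph V) : ℕ :=
  sInf { t : ℕ | ∃ S : Fin t → Finset V, ∀ x y : V, x ≠ y →
    (G.Adj x y ↔ Odd (Finset.univ.filter fun i => x ∈ S i ∧ y ∈ S i).card) }

/-- `C` is the vertex set of an attached star in `G`: the subgraph induced on `C` is a
star (with center `c`) all of whose noncentral vertices are leaves of `G`. -/
def IsAttachedStar (G : SimpleGraph V) (C : Set V) : Prop :=
  ∃ c ∈ C, (∃ x ∈ C, x ≠ c) ∧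
    ∀ x ∈ C, x ≠ c → G.Adj c x ∧ ∀ y, G.Adj x y → y = c

/-- Deletion of a vertex: the induced subgraph on the complement of `{v}`. -/
def deleteVert (G : SimpleGraph V) (v : V) : SimpleGraph {w : V // w ≠ v} :=
  SimpleGraph.comap Subtype.val G

/-- Deletion of a finite set of vertices. -/
def deleteVerts (G : SimpleGraph V) (T : Finset V) : SimpleGraph {w : V // w ∉ T} :=
  SimpleGraph.comap Subtype.val G

/-- The star `K_{1,m}` with center `0`. -/
def starGraph (m : ℕ) : SimpleGraph (Fin (m + 1)) :=
  SimpleGraph.fromRel fun x _ => x = 0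

/-- The disjoint union of three copies of `K₂`. -/
def threeK2 : SimpleGraph (Fin 6) :=
  SimpleGraph.fromRel fun x y =>
    (x = 0 ∧ y = 1) ∨ (x = 2 ∧ y = 3) ∨ (x = 4 ∧ y = 5)

/-- The disjoint union of two paths on three vertices. -/
def twoP3 : SimpleGraph (Fin 6) :=
  SimpleGraph.fromRel fun x y =>
    (x = 0 ∧ y = 1) ∨ (x = 1 ∧ y = 2) ∨ (x = 3 ∧ y = 4) ∨ (x = 4 ∧ y = 5)

/-- The disjoint union of `K₂` and the star `K_{1,k+1}`. -/
def K2PlusStar (k : ℕ) : SimpleGraph (Fin (k + 4)) :=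
  SimpleGraph.fromRel fun x y => (x.val = 0 ∧ y.val = 1) ∨ (x.val = 2 ∧ 3 ≤ y.val)

/-- `E_k`: the star `K_{1,k+1}` with one edge subdivided. Vertex `0` is the center,
`1` is the subdivision vertex, `2` is the leaf behind it, `3, …, k+2` are leaves. -/
def Egraph (k : ℕ) : SimpleGraph (Fin (k + 3)) :=
  SimpleGraph.fromRel fun x y =>
    (x.val = 0 ∧ y.val = 1) ∨ (x.val = 1 ∧ y.val = 2) ∨ (x.val = 0 ∧ 3 ≤ y.val)

/-- Finite graphs represented on the vertex sets `Fin n`. -/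
abbrev GraphOn := Σ n : ℕ, SimpleGraph (Fin n)

/-- `H` is isomorphic to an induced subgraph of `G`. -/
def IsIndSubgraph (H G : GraphOn) : Prop :=
  ∃ s : Set (Fin G.1), Nonempty (H.2 ≃g G.2.induce s)

/-- The sequence `x_n(ε)` from the paper. -/
noncomputable def xseq (ε : ℝ) : ℕ → ℤ
  | 0 => max ⌊2 - Real.logb 2 (1 - ε)⌋ 5
  | n + 1 => 2 ^ (8 * (n + 1) + 10) *
      ⌊(xseq ε n : ℝ) - Real.logb 2 (1 - Int.fract ((2 : ℝ) ^ (xseq ε n) * ε / 2)) + 1⌋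



set_option linter.unusedSectionVars false
set_option maxHeartbeats 1000000
open Matrix

section Stmt2Aux
variable {Vx : Type} [Fintype Vx] [DecidableEq Vx]

lemma z2 (a : ZMod 2) : a + a = 0 := by revert a; decide

lemma matrank (A : Matrix Vx Vx (ZMod 2)) :
    A.rank + Module.finrank (ZMod 2) (LinearMap.ker A.mulVecLin) = Fintype.card Vx := by
  have h := LinearMap.finrank_range_add_finrank_ker A.mulVecLin
  rwa [Module.finrank_pi] at h

lemma rank_lt_of_ker_lt {A B : Matrix Vx Vx (ZMod 2)}
    (h : LinearMap.ker A.mulVecLin < LinearMap.ker B.mulVecLin) : B.rank < A.rank := by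
  have h1 := matrank A
  have h2 := matrank B
  have h3 := Submodule.finrank_lt_finrank_of_lt h
  omega

lemma rank_drop2 {A B : Matrix Vx Vx (ZMod 2)} (K : Submodule (ZMod 2) (Vx → ZMod 2))
    (h1 : LinearMap.ker A.mulVecLin < K) (h2 : K < LinearMap.ker B.mulVecLin) :
    B.rank + 2 ≤ A.rank := by
  have g1 := matrank A
  have g2 := matrank B
  have g3 := Submodule.finrank_lt_finrank_of_lt h1
  have g4 := Submodule.finrank_lt_finrank_of_lt h2
  omega

lemma case1 (A : Matrix Vx Vx (ZMod 2)) (hA : A.IsSymm) (i : Vx) (hi : A i i = 1) :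
    ∃ B : Matrix Vx Vx (ZMod 2), B.IsSymm ∧ B.rank < A.rank ∧
      ∀ x y, A x y = B x y + A x i * A y i := by
  set B : Matrix Vx Vx (ZMod 2) := Matrix.of (fun x y => A x y + A x i * A y i) with hB
  have hBapp : ∀ x y, B x y = A x y + A x i * A y i := fun _ _ => rfl
  have key : ∀ x : Vx → ZMod 2, B *ᵥ x = fun t => (A *ᵥ x) t + A t i * (A *ᵥ x) i := by
    intro x; funext t
    show ∑ k, B t k * x k = _
    have hterm : ∀ k, B t k * x k = A t k * x k + A t i * (A i k * x k) := by
      intro k; rw [hBapp, hA.apply i k]; ring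
    rw [Finset.sum_congr rfl fun k _ => hterm k, Finset.sum_add_distrib, ← Finset.mul_sum]
    rfl
  have hker : LinearMap.ker A.mulVecLin < LinearMap.ker B.mulVecLin := by
    rw [SetLike.lt_iff_le_and_exists]
    refine ⟨?_, Pi.single i 1, ?_, ?_⟩
    · intro x hx
      rw [LinearMap.mem_ker, Matrix.mulVecLin_apply] at hx ⊢
      rw [key]
      funext t
      rw [hx]
      simp
    · rw [LinearMap.mem_ker, Matrix.mulVecLin_apply, Matrix.mulVec_single]
      funext t
      show B t i * 1 = 0
      rw [mul_one, hBapp, hi, mul_one, z2]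
    · intro h
      rw [LinearMap.mem_ker, Matrix.mulVecLin_apply, Matrix.mulVec_single] at h
      have := congrFun h i
      change A i i * 1 = 0 at this
      simp only [hi, mul_one] at this
      exact one_ne_zero this
  refine ⟨B, ?_, rank_lt_of_ker_lt hker, ?_⟩
  · ext x y
    rw [Matrix.transpose_apply, hBapp, hBapp, hA.apply x y, mul_comm (A y i) (A x i)]
  · intro x y
    rw [hBapp, add_assoc, z2, add_zero]

lemma case2 (A : Matrix Vx Vx (ZMod 2)) (hA : A.IsSymm) (i j : Vx) (hij : i ≠ j)
    (h1 : A i j = 1) (hd : ∀ t, A t t = 0) :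
    ∃ B : Matrix Vx Vx (ZMod 2), B.IsSymm ∧ B.rank + 2 ≤ A.rank ∧
      ∀ x y, A x y = B x y + (A x i * A y j + A x j * A y i) := by
  have hji : A j i = 1 := by rw [hA.apply i j]; exact h1
  set B : Matrix Vx Vx (ZMod 2) :=
    Matrix.of (fun x y => A x y + (A x i * A y j + A x j * A y i)) with hB
  have hBapp : ∀ x y, B x y = A x y + (A x i * A y j + A x j * A y i) := fun _ _ => rfl
  have key : ∀ x : Vx → ZMod 2,
      B *ᵥ x = fun t => (A *ᵥ x) t + (A t i * (A *ᵥ x) j + A t j * (A *ᵥ x) i) := by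
    intro x; funext t
    show ∑ k, B t k * x k = _
    have hterm : ∀ k, B t k * x k
        = A t k * x k + (A t i * (A j k * x k) + A t j * (A i k * x k)) := by
      intro k; rw [hBapp, hA.apply j k, hA.apply i k]; ring
    rw [Finset.sum_congr rfl fun k _ => hterm k, Finset.sum_add_distrib,
      Finset.sum_add_distrib, ← Finset.mul_sum, ← Finset.mul_sum]
    rfl
  have hkerle : LinearMap.ker A.mulVecLin ≤ LinearMap.ker B.mulVecLin := by
    intro x hx
    rw [LinearMap.mem_ker, Matrix.mulVecLin_apply] at hx ⊢
    rw [key]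
    funext t
    rw [hx]
    simp
  have hei : Pi.single i 1 ∈ LinearMap.ker B.mulVecLin := by
    rw [LinearMap.mem_ker, Matrix.mulVecLin_apply, Matrix.mulVec_single]
    funext t
    show B t i * 1 = 0
    rw [mul_one, hBapp, h1, hd i, mul_one, mul_zero, add_zero, z2]
  have hej : Pi.single j 1 ∈ LinearMap.ker B.mulVecLin := by
    rw [LinearMap.mem_ker, Matrix.mulVecLin_apply, Matrix.mulVec_single]
    funext t
    show B t j * 1 = 0
    rw [mul_one, hBapp, hji, hd j, mul_zero, mul_one, zero_add, z2]
  set K : Submodule (ZMod 2) (Vx → ZMod 2) :=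
    LinearMap.ker A.mulVecLin ⊔ Submodule.span (ZMod 2) {Pi.single i 1} with hK
  have hlt1 : LinearMap.ker A.mulVecLin < K := by
    rw [SetLike.lt_iff_le_and_exists]
    refine ⟨le_sup_left, Pi.single i 1,
      Submodule.mem_sup_right (Submodule.mem_span_singleton_self _), ?_⟩
    intro h
    rw [LinearMap.mem_ker, Matrix.mulVecLin_apply, Matrix.mulVec_single] at h
    have := congrFun h j
    change A j i * 1 = 0 at this
    simp only [hji, mul_one] at this
    exact one_ne_zero this
  have hlt2 : K < LinearMap.ker B.mulVecLin := by
    rw [SetLike.lt_iff_le_and_exists]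
    refine ⟨sup_le hkerle ((Submodule.span_singleton_le_iff_mem _ _).mpr hei),
      Pi.single j 1, hej, ?_⟩
    intro hmem
    rw [hK, Submodule.mem_sup] at hmem
    obtain ⟨y, hy, z, hz, hyz⟩ := hmem
    rw [Submodule.mem_span_singleton] at hz
    obtain ⟨c, rfl⟩ := hz
    rw [LinearMap.mem_ker, Matrix.mulVecLin_apply] at hy
    have h0 : A *ᵥ (y + c • (Pi.single i 1 : Vx → ZMod 2)) = A *ᵥ (Pi.single j 1 : Vx → ZMod 2) := by rw [hyz]
    rw [Matrix.mulVec_add, Matrix.mulVec_smul, hy, Matrix.mulVec_single,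
      Matrix.mulVec_single, zero_add] at h0
    have := congrFun h0 i
    change c * (A i i * 1) = A i j * 1 at this
    simp only [Pi.smul_apply, smul_eq_mul, hd i, h1, mul_zero, mul_one] at this
    exact one_ne_zero this.symm
  refine ⟨B, ?_, rank_drop2 K hlt1 hlt2, ?_⟩
  · ext x y
    rw [Matrix.transpose_apply, hBapp, hBapp, hA.apply x y,
      mul_comm (A y i) (A x j), mul_comm (A y j) (A x i)]
    ring
  · intro x y
    rw [hBapp, add_assoc, z2, add_zero]

lemma z2ne {a : ZMod 2} (h : a ≠ 0) : a = 1 := by revert a; decide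

lemma castOne (n : ℕ) : ((n : ZMod 2) = 1) ↔ Odd n := by
  rw [Nat.odd_iff, ← ZMod.natCast_mod n 2]
  rcases Nat.mod_two_eq_zero_or_one n with h | h <;> rw [h] <;> simp

lemma castZero {n : ℕ} (h : ¬ Odd n) : ((n : ZMod 2)) = 0 := by
  have h2 := (castOne n).not.mpr h
  revert h2
  generalize ((n : ZMod 2)) = a
  revert a; decide

lemma cast_card_filter {ι : Type*} [Fintype ι] (p : ι → Prop) [DecidablePred p] :
    (((Finset.univ.filter p).card : ℕ) : ZMod 2) = ∑ k, if p k then (1 : ZMod 2) else 0 := by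
  rw [Finset.card_filter, Nat.cast_sum]
  exact Finset.sum_congr rfl fun k _ => by split <;> simp

lemma DEC : ∀ (r : ℕ) (A : Matrix Vx Vx (ZMod 2)), A.rank ≤ r → A.IsSymm →
    ∃ (m : ℕ) (v : Fin m → Vx → ZMod 2), 2 * m ≤ 3 * A.rank ∧
      ∀ x y, x ≠ y → A x y = ∑ k, v k x * v k y := by
  intro r
  induction r using Nat.strong_induction_on with
  | _ r ih =>
    intro A hr hA
    by_cases h0 : ∀ x y : Vx, x ≠ y → A x y = 0
    · exact ⟨0, fun k => k.elim0, by omega, fun x y hxy => by simp [h0 x y hxy]⟩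
    · push_neg at h0
      obtain ⟨x0, y0, hxy0, hA0⟩ := h0
      by_cases hdiag : ∃ t, A t t ≠ 0
      · obtain ⟨i, hi⟩ := hdiag
        have hi1 : A i i = 1 := z2ne hi
        obtain ⟨B, hBs, hBr, hBd⟩ := case1 A hA i hi1
        obtain ⟨m, v, hm, hv⟩ := ih B.rank (by omega) B le_rfl hBs
        refine ⟨m + 1, Fin.cons (fun t => A t i) v, by omega, ?_⟩
        intro x y hxy
        rw [Fin.sum_univ_succ]
        simp only [Fin.cons_zero, Fin.cons_succ]
        rw [← hv x y hxy, hBd x y]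
        exact add_comm _ _
      · push_neg at hdiag
        have hd : ∀ t, A t t = 0 := hdiag
        have h1 : A x0 y0 = 1 := z2ne hA0
        obtain ⟨B, hBs, hBr, hBd⟩ := case2 A hA x0 y0 hxy0 h1 hd
        obtain ⟨m, v, hm, hv⟩ := ih B.rank (by omega) B le_rfl hBs
        refine ⟨m + 3, Fin.cons (fun t => A t x0) (Fin.cons (fun t => A t y0)
          (Fin.cons (fun t => A t x0 + A t y0) v)), by omega, ?_⟩
        intro x y hxy
        rw [Fin.sum_univ_succ, Fin.sum_univ_succ, Fin.sum_univ_succ]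
        simp only [Fin.cons_zero, Fin.cons_succ]
        rw [← hv x y hxy, hBd x y]
        generalize A x x0 = a
        generalize A x y0 = b
        generalize A y x0 = c
        generalize A y y0 = d
        generalize B x y = e
        revert a b c d e
        decide

lemma exists_cover (G : SimpleGraph Vx) (A : Matrix Vx Vx (ZMod 2)) (hA : A.IsSymm)
    (hpat : ∀ i j, i ≠ j → (A i j ≠ 0 ↔ G.Adj i j)) :
    ∃ m : ℕ, 2 * m ≤ 3 * A.rank ∧ (∃ S : Fin m → Finset Vx, ∀ x y : Vx, x ≠ y →
      (G.Adj x y ↔ Odd (Finset.univ.filter fun k => x ∈ S k ∧ y ∈ S k).card)) := by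
  obtain ⟨m, v, hm, hv⟩ := DEC A.rank A le_rfl hA
  refine ⟨m, hm, fun k => Finset.univ.filter (fun t => v k t = 1), ?_⟩
  intro x y hxy
  have hcard : (((Finset.univ.filter fun k =>
        x ∈ Finset.univ.filter (fun t => v k t = 1) ∧
        y ∈ Finset.univ.filter (fun t => v k t = 1)).card : ℕ) : ZMod 2)
      = ∑ k, v k x * v k y := by
    rw [cast_card_filter]
    apply Finset.sum_congr rfl
    intro k _
    simp only [Finset.mem_filter, Finset.mem_univ, true_and]
    generalize v k x = a
    generalize v k y = b
    revert a b
    decide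
  rw [← hpat x y hxy, ← castOne, hcard, ← hv x y hxy]
  generalize A x y = a
  revert a
  decide

lemma twinEq_refl (G : SimpleGraph Vx) (x : Vx) : TwinEq G x x := Or.inl rfl

lemma twinEq_symm {G : SimpleGraph Vx} {x y : Vx} (h : TwinEq G x y) : TwinEq G y x := by
  rcases h with rfl | h
  · exact Or.inl rfl
  · exact Or.inr fun z hzy hzx => (h z hzx hzy).symm

lemma twinEq_trans {G : SimpleGraph Vx} {x y z : Vx} (h1 : TwinEq G x y) (h2 : TwinEq G y z) :
    TwinEq G x z := by
  by_cases hxy : x = y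
  · subst hxy; exact h2
  by_cases hyz : y = z
  · subst hyz; exact h1
  by_cases hxz : x = z
  · exact Or.inl hxz
  rcases h1 with rfl | h1
  · exact absurd rfl hxy
  rcases h2 with rfl | h2
  · exact absurd rfl hyz
  refine Or.inr fun w hwx hwz => ?_
  by_cases hwy : w = y
  · subst hwy
    rw [G.adj_comm x w, h2 x hxy hxz, G.adj_comm z x,
      h1 z (fun h => hxz h.symm) (fun h => hyz h.symm)]
    exact G.adj_comm w z
  · exact (h1 w hwx hwy).trans (h2 w hwy hwz)

lemma TW1 {G : SimpleGraph Vx} {a b : Vx} (h : TwinEq G a b) :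
    ∀ c, c ≠ a → c ≠ b → (G.Adj a c ↔ G.Adj b c) := by
  rcases h with rfl | h
  · exact fun c _ _ => Iff.rfl
  · exact h

lemma TW {G : SimpleGraph Vx} (x y x' y' : Vx) (hxy : x ≠ y) (hx'y' : x' ≠ y')
    (hx : TwinEq G x x') (hy : TwinEq G y y') : (G.Adj x y ↔ G.Adj x' y') := by
  by_cases hxx : x' = x
  · subst hxx
    by_cases hyy : y' = y
    · subst hyy; exact Iff.rfl
    · rw [G.adj_comm x' y, G.adj_comm x' y']
      exact TW1 hy x' hxy hx'y'
  · by_cases hyy : y' = y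
    · subst hyy
      exact TW1 hx y' (Ne.symm hxy) (Ne.symm hx'y')
    · by_cases hyx' : y = x'
      · subst hyx'
        by_cases hxy' : x = y'
        · subst hxy'; exact G.adj_comm x y
        · have s1 : G.Adj x y ↔ G.Adj x y' := by
            rw [G.adj_comm x y, G.adj_comm x y']
            exact TW1 hy x hxy hxy'
          have s2 : G.Adj x y' ↔ G.Adj y y' := TW1 hx y' (fun h => hxy' h.symm) (Ne.symm hx'y')
          exact s1.trans s2
      · have s1 : G.Adj x y ↔ G.Adj x' y := TW1 hx y (Ne.symm hxy) hyx'
        have s2 : G.Adj x' y ↔ G.Adj x' y' := by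
          rw [G.adj_comm x' y, G.adj_comm x' y']
          exact TW1 hy x' (fun h => hyx' h.symm) hx'y'
        exact s1.trans s2

lemma minRank_le_nd (G : SimpleGraph Vx) : minRank (ZMod 2) G ≤ nd G := by
  classical
  set f : Vx → Finset Vx := fun x => Finset.univ.filter fun y => TwinEq G x y with hf
  set P : Finset Vx → Vx → Prop :=
    fun C y => ∃ x' ∈ C, ∃ y' ∈ f y, x' ≠ y' ∧ G.Adj x' y' with hP
  set A : Matrix Vx Vx (ZMod 2) := Matrix.of fun x y => if P (f x) y then 1 else 0 with hA
  have hAapp : ∀ x y, A x y = if P (f x) y then 1 else 0 := fun _ _ => rfl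
  have hfmem : ∀ x z : Vx, z ∈ f x ↔ TwinEq G x z := by
    intro x z; rw [hf]; simp
  have hmemf : ∀ x, x ∈ f x := fun x => (hfmem x x).mpr (Or.inl rfl)
  have hPiff : ∀ x y, x ≠ y → (P (f x) y ↔ G.Adj x y) := by
    intro x y hxy
    constructor
    · rintro ⟨x', hx', y', hy', hne, hadj⟩
      exact (TW x y x' y' hxy hne ((hfmem x x').mp hx') ((hfmem y y').mp hy')).mpr hadj
    · intro h; exact ⟨x, hmemf x, y, hmemf y, hxy, h⟩
  have hPsymm : ∀ x y, P (f y) x ↔ P (f x) y := by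
    intro x y
    constructor
    · rintro ⟨a, ha, b, hb, hne, hadj⟩; exact ⟨b, hb, a, ha, hne.symm, hadj.symm⟩
    · rintro ⟨a, ha, b, hb, hne, hadj⟩; exact ⟨b, hb, a, ha, hne.symm, hadj.symm⟩
  have hsym : A.IsSymm := by
    ext x y
    rw [Matrix.transpose_apply, hAapp, hAapp, if_congr (hPsymm x y) rfl rfl]
  have hpat : ∀ i j, i ≠ j → (A i j ≠ 0 ↔ G.Adj i j) := by
    intro i j hij
    rw [hAapp, ← hPiff i j hij]
    by_cases h : P (f i) j <;> simp [h]
  have hrank : A.rank ≤ nd G := by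
    set K := Finset.univ.image f with hK
    have hfactor : A = (Matrix.of fun x (c : K) => if f x = c.1 then (1 : ZMod 2) else 0) *
        (Matrix.of fun (c : K) y => if P c.1 y then (1 : ZMod 2) else 0) := by
      ext x y
      rw [Matrix.mul_apply]
      have hxK : f x ∈ K := Finset.mem_image_of_mem f (Finset.mem_univ x)
      rw [Finset.sum_eq_single (⟨f x, hxK⟩ : K)]
      · simp [hAapp]
      · intro c _ hc
        have hne : ¬ (f x = c.1) := fun h => hc (Subtype.ext h).symm
        simp [hne]
      · intro h; exact absurd (Finset.mem_univ _) h
    rw [hfactor]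
    refine le_trans (Matrix.rank_mul_le_left _ _) (le_trans (Matrix.rank_le_card_width _) ?_)
    rw [Fintype.card_coe]
    exact le_of_eq rfl
  exact le_trans (Nat.sInf_le ⟨A, hsym, hpat, rfl⟩) hrank

lemma nd_le_pow (G : SimpleGraph Vx) {t : ℕ} (S : Fin t → Finset Vx)
    (hS : ∀ x y : Vx, x ≠ y →
      (G.Adj x y ↔ Odd (Finset.univ.filter fun k => x ∈ S k ∧ y ∈ S k).card)) :
    nd G ≤ 2 ^ t := by
  classical
  set f : Vx → Finset Vx := fun x => Finset.univ.filter fun y => TwinEq G x y with hf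
  set h : Vx → (Fin t → Bool) := fun x k => decide (x ∈ S k) with hh
  have hfac : ∀ x y, h x = h y → f x = f y := by
    intro x y hxy
    by_cases hxy0 : x = y
    · rw [hxy0]
    have hmem : ∀ k, x ∈ S k ↔ y ∈ S k := by
      intro k
      have := congrFun hxy k
      rw [hh] at this
      simpa using this
    have htwin : TwinEq G x y := by
      refine Or.inr fun z hzx hzy => ?_
      rw [hS x z (Ne.symm hzx), hS y z (Ne.symm hzy)]
      have heq : (Finset.univ.filter fun k => x ∈ S k ∧ z ∈ S k)
          = (Finset.univ.filter fun k => y ∈ S k ∧ z ∈ S k) := by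
        apply Finset.filter_congr
        intro k _
        rw [hmem k]
      rw [heq]
    ext z
    rw [hf]
    simp only [Finset.mem_filter, Finset.mem_univ, true_and]
    exact ⟨fun hz => twinEq_trans (twinEq_symm htwin) hz, fun hz => twinEq_trans htwin hz⟩
  have h1 : (Finset.univ.image f).card ≤ (Finset.univ.image h).card := by
    apply Finset.card_le_card_of_surjOn
      (fun p => if hp : ∃ x, h x = p then f hp.choose else ∅)
    intro C hC
    simp only [Finset.coe_image, Finset.coe_univ, Set.image_univ, Set.mem_range] at hC ⊢
    obtain ⟨x, rfl⟩ := hC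
    refine ⟨h x, ⟨x, rfl⟩, ?_⟩
    have hp : ∃ z, h z = h x := ⟨x, rfl⟩
    show (if hp' : ∃ z, h z = h x then f hp'.choose else ∅) = f x
    rw [dif_pos hp]
    exact hfac _ _ hp.choose_spec
  have h2 : (Finset.univ.image h).card ≤ 2 ^ t := by
    have hcu : (Finset.univ.image h).card ≤ Fintype.card (Fin t → Bool) := by
      simpa using Finset.card_le_univ (Finset.univ.image h)
    have hcf : Fintype.card (Fin t → Bool) = 2 ^ t := by simp
    omega
  exact le_trans h1 h2

lemma adj_fit (G : SimpleGraph Vx) :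
    ∃ A : Matrix Vx Vx (ZMod 2), A.IsSymm ∧ (∀ i j, i ≠ j → (A i j ≠ 0 ↔ G.Adj i j)) := by
  refine ⟨Matrix.of fun x y => if G.Adj x y then 1 else 0, ?_, ?_⟩
  · ext x y
    rw [Matrix.transpose_apply]
    show (if G.Adj y x then (1 : ZMod 2) else 0) = if G.Adj x y then 1 else 0
    rw [G.adj_comm y x]
  · intro i j hij
    show (if G.Adj i j then (1 : ZMod 2) else 0) ≠ 0 ↔ _
    by_cases h : G.Adj i j <;> simp [h]


end Stmt2Aux

/-- For a graph with at least one edge,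
`Eρ(G) < cd(G) ≤ (3/2)·mr(F₂,G) ≤ (3/2)·nd(G) ≤ (3/2)·2^(cd(G))`. -/
theorem stmt2 {V : Type} [Fintype V] [DecidableEq V] (G : SimpleGraph V)
    (hE : ∃ x y, G.Adj x y) :
    avgCutRank G < cliqueDeltaCover G ∧
    (cliqueDeltaCover G : ℝ) ≤ 3 / 2 * minRank (ZMod 2) G ∧
    (3 / 2 : ℝ) * minRank (ZMod 2) G ≤ 3 / 2 * nd G ∧
    (3 / 2 : ℝ) * nd G ≤ 3 / 2 * 2 ^ cliqueDeltaCover G := by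
  classical
  obtain ⟨A1, hA1s, hA1p⟩ := adj_fit G
  have hmrne : { r : ℕ | ∃ A : Matrix V V (ZMod 2), A.IsSymm ∧
      (∀ i j, i ≠ j → (A i j ≠ 0 ↔ G.Adj i j)) ∧ A.rank = r }.Nonempty :=
    ⟨A1.rank, A1, hA1s, hA1p, rfl⟩
  obtain ⟨A0, hA0s, hA0p, hA0r⟩ : ∃ A : Matrix V V (ZMod 2), A.IsSymm ∧
      (∀ i j, i ≠ j → (A i j ≠ 0 ↔ G.Adj i j)) ∧ A.rank = minRank (ZMod 2) G :=
    Nat.sInf_mem hmrne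
  obtain ⟨m, hm, S0, hS0⟩ := exists_cover G A0 hA0s hA0p
  have hcdne : { t : ℕ | ∃ S : Fin t → Finset V, ∀ x y : V, x ≠ y →
      (G.Adj x y ↔ Odd (Finset.univ.filter fun i => x ∈ S i ∧ y ∈ S i).card) }.Nonempty :=
    ⟨m, S0, hS0⟩
  have hcdle : cliqueDeltaCover G ≤ m := Nat.sInf_le ⟨S0, hS0⟩
  set t := cliqueDeltaCover G with ht
  obtain ⟨S, hS⟩ : ∃ S : Fin t → Finset V, ∀ x y : V, x ≠ y →
      (G.Adj x y ↔ Odd (Finset.univ.filter fun i => x ∈ S i ∧ y ∈ S i).card) :=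
    Nat.sInf_mem hcdne
  have hcd1 : 1 ≤ t := by
    rcases Nat.eq_zero_or_pos t with h0 | h
    · exfalso
      obtain ⟨x, y, hxy⟩ := hE
      have hodd := (hS x y (G.ne_of_adj hxy)).mp hxy
      have hc : (Finset.univ.filter fun i => x ∈ S i ∧ y ∈ S i).card = 0 := by
        have hle := Finset.card_filter_le (Finset.univ : Finset (Fin t))
          (fun i => x ∈ S i ∧ y ∈ S i)
        rw [Finset.card_univ, Fintype.card_fin] at hle
        omega
      rw [hc] at hodd
      simp [Nat.odd_iff] at hodd
    · exact h
  have hcut : ∀ X : Finset V, cutRank G X ≤ t := by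
    intro X
    have hfac : (Matrix.of fun (i : X) (j : (Xᶜ : Finset V)) =>
        if G.Adj i.1 j.1 then (1 : ZMod 2) else 0)
        = (Matrix.of fun (i : X) (k : Fin t) => if i.1 ∈ S k then (1 : ZMod 2) else 0) *
          (Matrix.of fun (k : Fin t) (j : (Xᶜ : Finset V)) =>
            if j.1 ∈ S k then (1 : ZMod 2) else 0) := by
      ext i j
      have hne : i.1 ≠ j.1 := by
        intro h
        have hj := j.2
        rw [Finset.mem_compl] at hj
        exact hj (h ▸ i.2)
      rw [Matrix.mul_apply]
      simp only [Matrix.of_apply]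
      have hterm : ∀ k : Fin t,
          (if i.1 ∈ S k then (1 : ZMod 2) else 0) * (if j.1 ∈ S k then 1 else 0)
          = if (i.1 ∈ S k ∧ j.1 ∈ S k) then 1 else 0 := by
        intro k
        by_cases h1 : i.1 ∈ S k <;> by_cases h2 : j.1 ∈ S k <;> simp [h1, h2]
      rw [Finset.sum_congr rfl fun k _ => hterm k, ← cast_card_filter]
      by_cases hadj : G.Adj i.1 j.1
      · rw [if_pos hadj]
        exact ((castOne _).mpr ((hS i.1 j.1 hne).mp hadj)).symm
      · rw [if_neg hadj]
        refine (castZero ?_).symm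
        intro hodd
        exact hadj ((hS i.1 j.1 hne).mpr hodd)
    have h5 : cutRank G X = ((Matrix.of fun (i : X) (k : Fin t) =>
        if i.1 ∈ S k then (1 : ZMod 2) else 0) *
        (Matrix.of fun (k : Fin t) (j : (Xᶜ : Finset V)) =>
          if j.1 ∈ S k then (1 : ZMod 2) else 0)).rank := congrArg Matrix.rank hfac
    rw [h5]
    exact le_trans (Matrix.rank_mul_le_left _ _)
      (by simpa using Matrix.rank_le_card_width (Matrix.of fun (i : X) (k : Fin t) =>
        if i.1 ∈ S k then (1 : ZMod 2) else 0))
  have hzero : cutRank G (∅ : Finset V) = 0 := by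
    have hle := Matrix.rank_le_card_height (Matrix.of
      fun (i : ((∅ : Finset V) : Finset V)) (j : (((∅ : Finset V))ᶜ : Finset V)) =>
        if G.Adj i.1 j.1 then (1 : ZMod 2) else 0)
    rw [Fintype.card_coe, Finset.card_empty] at hle
    exact Nat.le_zero.mp hle
  have hsum : (∑ X : Finset V, cutRank G X) ≤ (2 ^ Fintype.card V - 1) * t := by
    have hsplit := Finset.add_sum_erase (Finset.univ : Finset (Finset V)) (cutRank G)
      (Finset.mem_univ (∅ : Finset V))
    rw [← hsplit, hzero, zero_add]
    have hbound := Finset.sum_le_card_nsmul ((Finset.univ : Finset (Finset V)).erase ∅)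
      (cutRank G) t (fun X _ => hcut X)
    rw [smul_eq_mul, Finset.card_erase_of_mem (Finset.mem_univ _), Finset.card_univ,
      Fintype.card_finset] at hbound
    exact hbound
  have h2n : (0 : ℝ) < 2 ^ Fintype.card V := by positivity
  have havg : avgCutRank G < t := by
    rw [avgCutRank, div_lt_iff₀ h2n]
    have hcast : (∑ X : Finset V, (cutRank G X : ℝ))
        = ((∑ X : Finset V, cutRank G X : ℕ) : ℝ) := by
      push_cast
      ring
    rw [hcast]
    have h1 : ((∑ X : Finset V, cutRank G X : ℕ) : ℝ)
        ≤ (((2 ^ Fintype.card V - 1) * t : ℕ) : ℝ) := by exact_mod_cast hsum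
    refine lt_of_le_of_lt h1 ?_
    have h1n : (1 : ℕ) ≤ 2 ^ Fintype.card V := Nat.one_le_two_pow
    have hcast2 : (((2 ^ Fintype.card V - 1) * t : ℕ) : ℝ)
        = ((2 : ℝ) ^ Fintype.card V - 1) * t := by
      push_cast [h1n]
      ring
    rw [hcast2]
    have htr : (1 : ℝ) ≤ t := by exact_mod_cast hcd1
    nlinarith
  have hb : (t : ℝ) ≤ 3 / 2 * minRank (ZMod 2) G := by
    have h2 : 2 * t ≤ 3 * minRank (ZMod 2) G := by
      calc 2 * t ≤ 2 * m := by omega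
        _ ≤ 3 * A0.rank := hm
        _ = 3 * minRank (ZMod 2) G := by rw [hA0r]
    have h3 := (Nat.cast_le (α := ℝ)).mpr h2
    push_cast at h3
    linarith
  have hc : (3 / 2 : ℝ) * minRank (ZMod 2) G ≤ 3 / 2 * nd G := by
    have h4 := (Nat.cast_le (α := ℝ)).mpr (minRank_le_nd G)
    exact mul_le_mul_of_nonneg_left h4 (by norm_num)
  have hd : (3 / 2 : ℝ) * nd G ≤ 3 / 2 * 2 ^ t := by
    have hnd := nd_le_pow G S hS
    have hcast := (Nat.cast_le (α := ℝ)).mpr hnd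
    push_cast at hcast
    exact mul_le_mul_of_nonneg_left hcast (by norm_num)
  exact ⟨havg, hb, hc, hd⟩


end AvgCutRank
end

section
/- Define the relation ≡_G on V(G) by x ≡_G y iff ρ_G({x}) = ρ_G({y}) ≥ ρ_G({x,y}). Then ≡_G is an equivalence relation on V(G), and every equivalence class of ≡_G is the vertex set of an attached star in G, a clique of pairwise true twins, or an independent set of pairwise false twins. -/
open scoped Classical

namespace AvgCutRank

variable {V : Type*} {W : Type*}

section Stmt8Aux

open Module Submodule

variable {F : Type*} [Field F] {m n : Type*} [Fintype m] [Fintype n] [DecidableEq n]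

private lemma mulVec_eq_sum_cols (A : Matrix m n F) (v : n → F) :
    A.mulVec v = ∑ j, v j • (fun i => A i j) := by
  ext i
  rw [Finset.sum_apply]
  simp only [Pi.smul_apply, smul_eq_mul]
  simp [Matrix.mulVec, dotProduct, mul_comm]

private lemma rank_le_one_of_cols (A : Matrix m n F) (w : m → F)
    (h : ∀ j, ∃ c : F, (fun i => A i j) = c • w) : A.rank ≤ 1 := by
  have hr : LinearMap.range A.mulVecLin ≤ Submodule.span F {w} := by
    rintro u ⟨v, rfl⟩
    rw [Matrix.mulVecLin_apply, mulVec_eq_sum_cols]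
    refine Submodule.sum_mem _ fun j _ => ?_
    obtain ⟨c, hc⟩ := h j
    rw [hc]
    exact Submodule.smul_mem _ _ (Submodule.smul_mem _ _ (Submodule.mem_span_singleton_self w))
  have h1 : Module.finrank F (Submodule.span F ({w} : Set (m → F))) ≤ 1 := by
    refine (finrank_span_le_card _).trans ?_
    simp
  exact le_trans (Submodule.finrank_mono hr) h1

private lemma one_le_rank_of_entry (A : Matrix m n F) (i : m) (j : n) (h : A i j ≠ 0) :
    1 ≤ A.rank := by
  rw [Nat.one_le_iff_ne_zero]
  intro h0
  have hbot : LinearMap.range A.mulVecLin = ⊥ := Submodule.finrank_eq_zero.mp h0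
  have hc : A.mulVecLin (Pi.single j 1) = 0 := by
    have hm := LinearMap.mem_range_self A.mulVecLin (Pi.single j 1)
    rw [hbot, Submodule.mem_bot] at hm
    exact hm
  rw [Matrix.mulVecLin_apply, Matrix.mulVec_single_one] at hc
  exact h (by simpa using congrFun hc i)

private lemma li_pair {u v : m → F} {a b : m} (hu1 : u a = 1) (hu0 : u b = 0)
    (hv : v b = 1) : LinearIndependent F ![u, v] := by
  rw [LinearIndependent.pair_iff]
  intro s t hst
  have hb : t = 0 := by simpa [hu0, hv] using congrFun hst b
  have ha : s = 0 := by simpa [hu1, hb] using congrFun hst a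
  exact ⟨ha, hb⟩

private lemma two_le_rank_of_cols (A : Matrix m n F) (j k : n)
    (h : LinearIndependent F ![fun i => A i j, fun i => A i k]) : 2 ≤ A.rank := by
  have hle : Submodule.span F (Set.range ![fun i => A i j, fun i => A i k])
      ≤ LinearMap.range A.mulVecLin := by
    rw [Submodule.span_le]
    rintro u ⟨idx, rfl⟩
    fin_cases idx
    · simp only [Matrix.cons_val_zero]
      exact ⟨Pi.single j 1, by rw [Matrix.mulVecLin_apply, Matrix.mulVec_single_one]; rfl⟩
    · simp only [Matrix.cons_val_one, Matrix.head_cons]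
      exact ⟨Pi.single k 1, by rw [Matrix.mulVecLin_apply, Matrix.mulVec_single_one]; rfl⟩
  have hmono := Submodule.finrank_mono hle
  rw [finrank_span_eq_card h] at hmono
  show (2 : ℕ) ≤ Module.finrank F (LinearMap.range A.mulVecLin)
  simpa using hmono

variable {V : Type} [Fintype V] [DecidableEq V]

private def IsoV (G : SimpleGraph V) (x : V) : Prop := ∀ z, z ≠ x → ¬G.Adj x z

private def TwR (G : SimpleGraph V) (x y : V) : Prop :=
  ∀ z, z ≠ x → z ≠ y → (G.Adj x z ↔ G.Adj y z)

private def LfR (G : SimpleGraph V) (x y : V) : Prop :=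
  G.Adj x y ∧ ∀ z, G.Adj x z → z = y

private def charP (G : SimpleGraph V) (x y : V) : Prop :=
  x = y ∨ (IsoV G x ∧ IsoV G y) ∨
    (¬IsoV G x ∧ ¬IsoV G y ∧ (TwR G x y ∨ LfR G x y ∨ LfR G y x))

private lemma cutRank_eq_zero_of (G : SimpleGraph V) (X : Finset V)
    (h : ∀ i ∈ X, ∀ j, j ∉ X → ¬G.Adj i j) : cutRank G X = 0 := by
  unfold cutRank
  have hz : (Matrix.of fun (i : X) (j : (Xᶜ : Finset V)) =>
      if G.Adj i.1 j.1 then (1 : ZMod 2) else 0) = 0 := by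
    ext i j
    have hj : j.1 ∉ X := by
      have := j.2
      rwa [Finset.mem_compl] at this
    simp [h i.1 i.2 j.1 hj]
  rw [hz, Matrix.rank_zero]

private lemma one_le_cutRank_of (G : SimpleGraph V) (X : Finset V) {a b : V}
    (ha : a ∈ X) (hb : b ∉ X) (hab : G.Adj a b) : 1 ≤ cutRank G X := by
  unfold cutRank
  refine one_le_rank_of_entry _ ⟨a, ha⟩ ⟨b, Finset.mem_compl.mpr hb⟩ ?_
  simp [hab]

private lemma cutRank_singleton (G : SimpleGraph V) (x : V) :
    cutRank G {x} = if IsoV G x then 0 else 1 := by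
  by_cases hx : IsoV G x
  · rw [if_pos hx]
    refine cutRank_eq_zero_of G {x} ?_
    intro i hi j hj hadj
    rw [Finset.mem_singleton] at hi
    subst hi
    exact hx j (by simpa using hj) hadj
  · rw [if_neg hx]
    have hle : cutRank G {x} ≤ 1 := by
      unfold cutRank
      refine (Matrix.rank_le_card_height _).trans ?_
      simp [Fintype.card_coe]
    rw [IsoV] at hx
    push_neg at hx
    obtain ⟨z, hz, hadj⟩ := hx
    exact le_antisymm hle
      (one_le_cutRank_of G {x} (Finset.mem_singleton_self x) (by simp [hz]) hadj)

private lemma cutRank_pair_le_one (G : SimpleGraph V) {x y : V} (hxy : x ≠ y)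
    (hD : TwR G x y ∨ (∀ z, z ≠ x → z ≠ y → ¬G.Adj x z) ∨
      (∀ z, z ≠ x → z ≠ y → ¬G.Adj y z)) :
    cutRank G {x, y} ≤ 1 := by
  unfold cutRank
  have hmem : ∀ i : (({x, y} : Finset V) : Type), i.1 = x ∨ i.1 = y := by
    intro i
    rcases Finset.mem_insert.mp i.2 with h | h
    · exact Or.inl h
    · exact Or.inr (Finset.mem_singleton.mp h)
  have hcomp : ∀ j : ((({x, y} : Finset V)ᶜ : Finset V) : Type), j.1 ≠ x ∧ j.1 ≠ y := by
    intro j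
    have := j.2
    rw [Finset.mem_compl] at this
    simpa [Finset.mem_insert, Finset.mem_singleton] using this
  rcases hD with hTw | hx0 | hy0
  · refine rank_le_one_of_cols _ (fun _ => (1 : ZMod 2)) fun j => ?_
    refine ⟨if G.Adj x j.1 then 1 else 0, ?_⟩
    funext i
    rcases hmem i with hi | hi
    · simp [Matrix.of_apply, hi]
    · simp only [Matrix.of_apply, Pi.smul_apply, smul_eq_mul, mul_one, hi]
      exact if_congr (hTw j.1 (hcomp j).1 (hcomp j).2).symm rfl rfl
  · refine rank_le_one_of_cols _ (fun i => if i.1 = y then (1 : ZMod 2) else 0) fun j => ?_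
    refine ⟨if G.Adj y j.1 then 1 else 0, ?_⟩
    funext i
    rcases hmem i with hi | hi
    · simp [Matrix.of_apply, hi, hxy, hx0 j.1 (hcomp j).1 (hcomp j).2]
    · simp [Matrix.of_apply, hi]
  · refine rank_le_one_of_cols _ (fun i => if i.1 = x then (1 : ZMod 2) else 0) fun j => ?_
    refine ⟨if G.Adj x j.1 then 1 else 0, ?_⟩
    funext i
    rcases hmem i with hi | hi
    · simp [Matrix.of_apply, hi]
    · simp [Matrix.of_apply, hi, Ne.symm hxy, hy0 j.1 (hcomp j).1 (hcomp j).2]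

private lemma cutRank_pair_ge (G : SimpleGraph V) {x y : V} (hxy : x ≠ y)
    (h : cutRank G {x, y} ≤ 1) :
    TwR G x y ∨ (∀ z, z ≠ x → z ≠ y → ¬G.Adj x z) ∨
      (∀ z, z ≠ x → z ≠ y → ¬G.Adj y z) := by
  by_contra hD
  push_neg at hD
  obtain ⟨hTw, hx0, hy0⟩ := hD
  rw [TwR] at hTw
  push_neg at hTw
  obtain ⟨z1, hz1x, hz1y, hz1⟩ := hTw
  obtain ⟨z2, hz2x, hz2y, hz2⟩ := hx0
  obtain ⟨z3, hz3x, hz3y, hz3⟩ := hy0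
  have hlt : 2 ≤ cutRank G {x, y} := by
    unfold cutRank
    have hxX : x ∈ ({x, y} : Finset V) := Finset.mem_insert_self x {y}
    have hyX : y ∈ ({x, y} : Finset V) :=
      Finset.mem_insert_of_mem (Finset.mem_singleton_self y)
    have hj1 : z1 ∈ ((({x, y} : Finset V))ᶜ : Finset V) := by
      rw [Finset.mem_compl]
      simp [Finset.mem_insert, Finset.mem_singleton, hz1x, hz1y]
    have hj2 : z2 ∈ ((({x, y} : Finset V))ᶜ : Finset V) := by
      rw [Finset.mem_compl]
      simp [Finset.mem_insert, Finset.mem_singleton, hz2x, hz2y]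
    have hj3 : z3 ∈ ((({x, y} : Finset V))ᶜ : Finset V) := by
      rw [Finset.mem_compl]
      simp [Finset.mem_insert, Finset.mem_singleton, hz3x, hz3y]
    rcases hz1 with ⟨hxz1, hyz1⟩ | ⟨hxz1, hyz1⟩
    · refine two_le_rank_of_cols _ ⟨z1, hj1⟩ ⟨z3, hj3⟩
        (li_pair (a := ⟨x, hxX⟩) (b := ⟨y, hyX⟩) ?_ ?_ ?_)
      · simp [hxz1]
      · simp [hyz1]
      · simp [hz3]
    · refine two_le_rank_of_cols _ ⟨z1, hj1⟩ ⟨z2, hj2⟩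
        (li_pair (a := ⟨y, hyX⟩) (b := ⟨x, hxX⟩) ?_ ?_ ?_)
      · simp [hyz1]
      · simp [hxz1]
      · simp [hz2]
  omega

private lemma lf_of_row0 (G : SimpleGraph V) {x y : V} (hx : ¬IsoV G x) (hxy : x ≠ y)
    (h0 : ∀ z, z ≠ x → z ≠ y → ¬G.Adj x z) : LfR G x y := by
  rw [IsoV] at hx
  push_neg at hx
  obtain ⟨z, hzx, hz⟩ := hx
  have hzy : z = y := by
    by_contra hzy
    exact h0 z hzx hzy hz
  subst hzy
  refine ⟨hz, fun w hw => ?_⟩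
  by_contra hwy
  exact h0 w (Ne.symm hw.ne) hwy hw

private lemma E_iff (G : SimpleGraph V) (x y : V) :
    (cutRank G {x} = cutRank G {y} ∧ cutRank G {x, y} ≤ cutRank G {y}) ↔ charP G x y := by
  by_cases hxy : x = y
  · subst hxy
    have hpair : ({x, x} : Finset V) = {x} := by simp
    rw [charP]
    exact iff_of_true ⟨rfl, by rw [hpair]⟩ (Or.inl rfl)
  · rw [charP]
    by_cases hx : IsoV G x <;> by_cases hy : IsoV G y
    · refine iff_of_true ⟨?_, ?_⟩ (Or.inr (Or.inl ⟨hx, hy⟩))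
      · rw [cutRank_singleton, cutRank_singleton, if_pos hx, if_pos hy]
      · have h0 : cutRank G {x, y} = 0 := by
          refine cutRank_eq_zero_of G {x, y} ?_
          intro i hi j hj hadj
          rw [Finset.mem_insert, Finset.mem_singleton] at hi
          have hj' : j ≠ x ∧ j ≠ y := by
            rw [Finset.mem_insert, Finset.mem_singleton] at hj
            push_neg at hj
            exact hj
          rcases hi with rfl | rfl
          · exact hx j hj'.1 hadj
          · exact hy j hj'.2 hadj
        rw [h0]
        exact Nat.zero_le _
    · refine iff_of_false ?_ ?_
      · rintro ⟨h1, -⟩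
        rw [cutRank_singleton, cutRank_singleton, if_pos hx, if_neg hy] at h1
        exact absurd h1 (by norm_num)
      · rintro (h | ⟨-, h⟩ | ⟨h, -⟩)
        · exact hxy h
        · exact hy h
        · exact h hx
    · refine iff_of_false ?_ ?_
      · rintro ⟨h1, -⟩
        rw [cutRank_singleton, cutRank_singleton, if_neg hx, if_pos hy] at h1
        exact absurd h1 (by norm_num)
      · rintro (h | ⟨h, -⟩ | ⟨-, h, -⟩)
        · exact hxy h
        · exact hx h
        · exact h hy
    · have h1 : cutRank G {x} = 1 := by rw [cutRank_singleton, if_neg hx]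
      have h2 : cutRank G {y} = 1 := by rw [cutRank_singleton, if_neg hy]
      rw [h1, h2]
      constructor
      · rintro ⟨-, hle⟩
        refine Or.inr (Or.inr ⟨hx, hy, ?_⟩)
        rcases cutRank_pair_ge G hxy hle with hT | h0 | h0
        · exact Or.inl hT
        · exact Or.inr (Or.inl (lf_of_row0 G hx hxy h0))
        · exact Or.inr (Or.inr (lf_of_row0 G hy (Ne.symm hxy)
            (fun z hzy hzx => h0 z hzx hzy)))
      · rintro (h | ⟨h, -⟩ | ⟨-, -, hr⟩)
        · exact absurd h hxy
        · exact absurd h hx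
        · refine ⟨rfl, ?_⟩
          refine cutRank_pair_le_one G hxy ?_
          rcases hr with hT | hL | hL
          · exact Or.inl hT
          · exact Or.inr (Or.inl fun z hzx hzy hadj => hzy (hL.2 z hadj))
          · exact Or.inr (Or.inr fun z hzx hzy hadj => hzx (hL.2 z hadj))

private lemma char_symm (G : SimpleGraph V) {x y : V} (h : charP G x y) : charP G y x := by
  rcases h with rfl | ⟨hx, hy⟩ | ⟨hx, hy, hT | hL | hL⟩
  · exact Or.inl rfl
  · exact Or.inr (Or.inl ⟨hy, hx⟩)
  · exact Or.inr (Or.inr ⟨hy, hx, Or.inl fun z h1 h2 => (hT z h2 h1).symm⟩)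
  · exact Or.inr (Or.inr ⟨hy, hx, Or.inr (Or.inr hL)⟩)
  · exact Or.inr (Or.inr ⟨hy, hx, Or.inr (Or.inl hL)⟩)

private lemma char_trans (G : SimpleGraph V) {x y z : V} (h1 : charP G x y)
    (h2 : charP G y z) : charP G x z := by
  by_cases hxy : x = y
  · subst hxy
    exact h2
  by_cases hyz : y = z
  · subst hyz
    exact h1
  by_cases hxz : x = z
  · exact Or.inl hxz
  rcases h1 with h | ⟨hx, hy⟩ | ⟨hx, hy, hr1⟩
  · exact absurd h hxy
  · rcases h2 with h | ⟨hy', hz⟩ | ⟨hy', -, -⟩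
    · exact absurd h hyz
    · exact Or.inr (Or.inl ⟨hx, hz⟩)
    · exact absurd hy hy'
  · rcases h2 with h | ⟨hy', -⟩ | ⟨-, hz, hr2⟩
    · exact absurd h hyz
    · exact absurd hy' hy
    · refine Or.inr (Or.inr ⟨hx, hz, ?_⟩)
      rcases hr1 with hT1 | hL1 | hL1'
      · rcases hr2 with hT2 | hL2 | hL2'
        · -- Tw x y, Tw y z → Tw x z
          refine Or.inl fun w hwx hwz => ?_
          by_cases hwy : w = y
          · rw [hwy]
            have e1 : G.Adj y x ↔ G.Adj z x := hT2 x hxy hxz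
            have e2 : G.Adj x z ↔ G.Adj y z := hT1 z (Ne.symm hxz) (Ne.symm hyz)
            constructor
            · intro h
              exact ((e2.mp (e1.mp h.symm).symm)).symm
            · intro h
              exact ((e1.mpr (e2.mpr h.symm).symm)).symm
          · exact (hT1 w hwx hwy).trans (hT2 w hwy hwz)
        · -- Tw x y, Lf y z → Lf x z
          refine Or.inr (Or.inl ⟨(hT1 z (Ne.symm hxz) (Ne.symm hyz)).mpr hL2.1, ?_⟩)
          intro w hw
          by_cases hwy : w = y
          · subst hwy
            exact absurd (hL2.2 x hw.symm) hxz
          · exact hL2.2 w ((hT1 w (Ne.symm hw.ne) hwy).mp hw)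
        · -- Tw x y, Lf z y → impossible
          exfalso
          have hadj : G.Adj x z := (hT1 z (Ne.symm hxz) (Ne.symm hyz)).mpr hL2'.1.symm
          exact hxy (hL2'.2 x hadj.symm)
      · rcases hr2 with hT2 | hL2 | hL2'
        · -- Lf x y, Tw y z → impossible
          exfalso
          have hadj : G.Adj z x := (hT2 x hxy hxz).mp hL1.1.symm
          exact hyz (hL1.2 z hadj.symm).symm
        · -- Lf x y, Lf y z → impossible
          exact absurd (hL2.2 x hL1.1.symm) hxz
        · -- Lf x y, Lf z y → Tw x z
          refine Or.inl fun w hwx hwz => ?_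
          constructor
          · intro h
            have hwy : w = y := hL1.2 w h
            subst hwy
            exact hL2'.1
          · intro h
            have hwy : w = y := hL2'.2 w h
            subst hwy
            exact hL1.1
      · rcases hr2 with hT2 | hL2 | hL2'
        · -- Lf y x, Tw y z → Lf z x
          refine Or.inr (Or.inr ⟨(hT2 x hxy hxz).mp hL1'.1, ?_⟩)
          intro w hw
          by_cases hwy : w = y
          · subst hwy
            exact absurd (hL1'.2 z hw.symm) (Ne.symm hxz)
          · exact hL1'.2 w ((hT2 w hwy (Ne.symm hw.ne)).mpr hw)
        · -- Lf y x, Lf y z → impossible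
          exact absurd (hL1'.2 z hL2.1).symm hxz
        · -- Lf y x, Lf z y → impossible
          exact absurd (hL1'.2 z hL2'.1.symm).symm hxz

end Stmt8Aux

/-- The relation `x ≡_G y ↔ ρ({x}) = ρ({y}) ≥ ρ({x,y})` is an
equivalence relation, and each of its classes is the vertex set of an attached star,
a clique of pairwise true twins, or an independent set of pairwise false twins. -/
theorem stmt8 {V : Type} [Fintype V] [DecidableEq V] (G : SimpleGraph V) :
    Equivalence (fun x y : V =>
      cutRank G {x} = cutRank G {y} ∧ cutRank G {x, y} ≤ cutRank G {y}) ∧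
    ∀ x : V, ∀ C : Set V,
      C = { y | cutRank G {x} = cutRank G {y} ∧ cutRank G {x, y} ≤ cutRank G {y} } →
      (IsAttachedStar G C ∨
       (∀ y ∈ C, ∀ z ∈ C, y ≠ z → G.Adj y z ∧ IsTwins G y z) ∨
       (∀ y ∈ C, ∀ z ∈ C, y ≠ z → ¬G.Adj y z ∧ IsTwins G y z)) := by
  have hEquiv : Equivalence (fun x y : V =>
      cutRank G {x} = cutRank G {y} ∧ cutRank G {x, y} ≤ cutRank G {y}) := by
    constructor
    · intro a
      exact (E_iff G a a).mpr (Or.inl rfl)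
    · intro a b h
      exact (E_iff G b a).mpr (char_symm G ((E_iff G a b).mp h))
    · intro a b c ha hb
      exact (E_iff G a c).mpr (char_trans G ((E_iff G a b).mp ha) ((E_iff G b c).mp hb))
  refine ⟨hEquiv, ?_⟩
  intro x C hC
  have hmem : ∀ y, y ∈ C ↔ charP G x y := by
    intro y
    rw [hC]
    exact E_iff G x y
  have hxC : x ∈ C := (hmem x).mpr (Or.inl rfl)
  by_cases hx : IsoV G x
  · -- all class members are isolated: independent set of false twins
    have hIso : ∀ y ∈ C, IsoV G y := by
      intro y hy
      rcases (hmem y).mp hy with rfl | ⟨-, h⟩ | ⟨h, -⟩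
      · exact hx
      · exact h
      · exact absurd hx h
    refine Or.inr (Or.inr ?_)
    intro y hy z hz hyz
    exact ⟨hIso y hy z (Ne.symm hyz), hyz,
      fun w hwy hwz => iff_of_false (hIso y hy w hwy) (hIso z hz w hwz)⟩
  · have hNonIso : ∀ y ∈ C, ¬IsoV G y := by
      intro y hy
      rcases (hmem y).mp hy with rfl | ⟨h, -⟩ | ⟨-, h, -⟩
      · exact hx
      · exact absurd h hx
      · exact h
    have hpair : ∀ y ∈ C, ∀ z ∈ C, y ≠ z →
        (TwR G y z ∨ LfR G y z ∨ LfR G z y) := by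
      intro y hy z hz hyz
      have h := char_trans G (char_symm G ((hmem y).mp hy)) ((hmem z).mp hz)
      rcases h with h | ⟨h, -⟩ | ⟨-, -, hr⟩
      · exact absurd h hyz
      · exact absurd h (hNonIso y hy)
      · exact hr
    by_cases hLf : ∃ c ∈ C, ∃ y ∈ C, y ≠ c ∧ LfR G y c
    · -- attached star
      left
      obtain ⟨c, hc, y, hyC, hyc, hLfyc⟩ := hLf
      refine ⟨c, hc, ⟨y, hyC, hyc⟩, ?_⟩
      intro w hwC hwc
      have hLw : LfR G w c := by
        by_cases hwy : w = y
        · subst hwy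
          exact hLfyc
        · rcases hpair y hyC w hwC (fun h => hwy h.symm) with hTw | hL1 | hL2
          · refine ⟨(hTw c (Ne.symm hyc) (Ne.symm hwc)).mp hLfyc.1, ?_⟩
            intro u hu
            by_cases huy : u = y
            · subst huy
              exact absurd (hLfyc.2 w hu.symm) hwc
            · exact hLfyc.2 u ((hTw u huy (Ne.symm hu.ne)).mpr hu)
          · exact absurd (hL1.2 c hLfyc.1) (Ne.symm hwc)
          · exact absurd (hLfyc.2 w hL2.1.symm) hwc
      exact ⟨hLw.1.symm, hLw.2⟩
    · -- all pairs are twins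
      push_neg at hLf
      have hTwAll : ∀ y ∈ C, ∀ z ∈ C, y ≠ z → TwR G y z := by
        intro y hy z hz hyz
        rcases hpair y hy z hz hyz with h | h | h
        · exact h
        · exact absurd h (hLf z hz y hy hyz)
        · exact absurd h (hLf y hy z hz (Ne.symm hyz))
      by_cases hadj : ∃ y ∈ C, ∃ z ∈ C, y ≠ z ∧ G.Adj y z
      · refine Or.inr (Or.inl ?_)
        obtain ⟨y0, hy0, z0, hz0, hyz0, hadj0⟩ := hadj
        have step1 : ∀ a ∈ C, ∀ b ∈ C, a ≠ b → G.Adj a b →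
            ∀ v ∈ C, v ≠ a → G.Adj a v := by
          intro a ha b hb hab hadj v hv hva
          by_cases hvb : v = b
          · subst hvb
            exact hadj
          · have h2 := hTwAll b hb v hv (fun h => hvb h.symm) a hab (Ne.symm hva)
            exact (h2.mp hadj.symm).symm
        intro y hy z hz hyz
        have hAdjyz : G.Adj y z := by
          by_cases hyy : y = y0
          · subst hyy
            exact step1 y hy z0 hz0 hyz0 hadj0 z hz (Ne.symm hyz)
          · have ha1 : G.Adj y0 y := step1 y0 hy0 z0 hz0 hyz0 hadj0 y hy hyy
            exact step1 y hy y0 hy0 hyy ha1.symm z hz (Ne.symm hyz)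
        exact ⟨hAdjyz, hyz, hTwAll y hy z hz hyz⟩
      · refine Or.inr (Or.inr ?_)
        push_neg at hadj
        intro y hy z hz hyz
        exact ⟨hadj y hy z hz hyz, hyz, hTwAll y hy z hz hyz⟩

end AvgCutRank
end

section
/- For all integers m, k ≥ 1, the average cut-rank of the complete graph K_k equals 1 − 2^{1−k}, and the average cut-rank of the complete bipartite graph K_{m,k} equals (2^m − 1)(2^k − 1)/2^{m+k−1}. In particular Eρ(K_{1,k}) = 1 − 2^{−k} = Eρ(K_{k+1}). -/
open scoped Classical

namespace AvgCutRank

variable {V : Type*} {W : Type*}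

variable {F : Type*} [Field F]

lemma rank_submatrix_le_gen {α β γ δ : Type*} [Fintype α] [Fintype β] [Fintype γ] [Fintype δ]
    [DecidableEq α] [DecidableEq β]
    (A : Matrix α β F) (f : γ → α) (g : δ → β) :
    (A.submatrix f g).rank ≤ A.rank := by
  have h : A.submatrix f g =
      (Matrix.of fun (c : γ) (a : α) => if a = f c then (1:F) else 0) * A *
      (Matrix.of fun (b : β) (d : δ) => if b = g d then (1:F) else 0) := by
    ext c d
    simp [Matrix.mul_apply, ite_mul, mul_ite, one_mul, zero_mul, mul_one, mul_zero,
      Finset.sum_ite_eq, Finset.sum_ite_eq']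
  rw [h]
  exact (Matrix.rank_mul_le_left _ _).trans (Matrix.rank_mul_le_right _ _)

lemma one_le_rank_of_ne_zero {α β : Type*} [Fintype α] [Fintype β]
    [DecidableEq α] [DecidableEq β]
    (A : Matrix α β F) (i : α) (j : β) (h : A i j ≠ 0) : 1 ≤ A.rank := by
  have hle := rank_submatrix_le_gen A (fun _ : Fin 1 => i) (fun _ : Fin 1 => j)
  have : (A.submatrix (fun _ : Fin 1 => i) (fun _ : Fin 1 => j)).rank = 1 := by
    rw [Matrix.rank_of_isUnit]
    · simp
    · rw [Matrix.isUnit_iff_isUnit_det, isUnit_iff_ne_zero, Matrix.det_fin_one]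
      exact h
  omega

lemma two_le_rank {α β : Type*} [Fintype α] [Fintype β] [DecidableEq α] [DecidableEq β]
    (A : Matrix α β F) (i1 i2 : α) (j1 j2 : β)
    (h11 : A i1 j1 ≠ 0) (h22 : A i2 j2 ≠ 0) (h12 : A i1 j2 = 0) (h21 : A i2 j1 = 0) :
    2 ≤ A.rank := by
  have hle := rank_submatrix_le_gen A ![i1, i2] ![j1, j2]
  have : (A.submatrix ![i1, i2] ![j1, j2]).rank = 2 := by
    rw [Matrix.rank_of_isUnit]
    · simp
    · rw [Matrix.isUnit_iff_isUnit_det, isUnit_iff_ne_zero, Matrix.det_fin_two]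
      simp [h12, h21, h11, h22]
  omega

lemma rank_le_one_outer {α β : Type*} [Fintype α] [Fintype β]
    (A : Matrix α β F) (u : α → F) (v : β → F)
    (h : ∀ i j, A i j = u i * v j) : A.rank ≤ 1 := by
  have hA : A = (Matrix.of fun i (_ : Fin 1) => u i) * (Matrix.of fun (_ : Fin 1) j => v j) := by
    ext i j; simp [Matrix.mul_apply, h]
  rw [hA]
  exact (Matrix.rank_mul_le_left _ _).trans ((Matrix.rank_le_card_width _).trans (by simp))

lemma rank_le_two_outer {α β : Type*} [Fintype α] [Fintype β]
    (A : Matrix α β F) (u1 u2 : α → F) (v1 v2 : β → F)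
    (h : ∀ i j, A i j = u1 i * v1 j + u2 i * v2 j) : A.rank ≤ 2 := by
  have hA : A = (Matrix.of fun i (c : Fin 2) => if c = 0 then u1 i else u2 i) *
      (Matrix.of fun (c : Fin 2) j => if c = 0 then v1 j else v2 j) := by
    ext i j; simp [Matrix.mul_apply, Fin.sum_univ_two, h]
  rw [hA]
  exact (Matrix.rank_mul_le_left _ _).trans ((Matrix.rank_le_card_width _).trans (by simp))


lemma cutRank_eq [Fintype V] [DecidableEq V] (G : SimpleGraph V) (X : Finset V)
    (A : Matrix X (Xᶜ : Finset V) (ZMod 2))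
    (h : ∀ (i : X) (j : (Xᶜ : Finset V)), A i j = if G.Adj i.1 j.1 then 1 else 0) :
    cutRank G X = A.rank := by
  unfold cutRank
  congr 1
  ext i j
  rw [h i j]
  by_cases hadj : G.Adj i.1 j.1 <;> simp [hadj]

lemma cutRank_top (k : ℕ) (X : Finset (Fin k)) :
    cutRank (⊤ : SimpleGraph (Fin k)) X =
      if X = ∅ ∨ X = Finset.univ then 0 else 1 := by
  set A := (Matrix.of fun (i : X) (j : (Xᶜ : Finset (Fin k))) =>
    if (⊤ : SimpleGraph (Fin k)).Adj i.1 j.1 then (1 : ZMod 2) else 0) with hA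
  have hcut : cutRank (⊤ : SimpleGraph (Fin k)) X = A.rank := cutRank_eq _ _ _ (fun i j => by rw [hA]; simp only [Matrix.of_apply]; split_ifs <;> rfl)
  split_ifs with h
  · rcases h with h | h
    · have h1 : A.rank ≤ Fintype.card X := Matrix.rank_le_card_height A
      rw [hcut]
      simp only [Fintype.card_coe, h, Finset.card_empty] at h1 ⊢
      omega
    · have h1 : A.rank ≤ Fintype.card (Xᶜ : Finset (Fin k)) := Matrix.rank_le_card_width A
      rw [hcut]
      have : (Xᶜ : Finset (Fin k)).card = 0 := by simp [h]
      simp only [Fintype.card_coe, this] at h1 ⊢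
      omega
  · push_neg at h
    obtain ⟨h1, h2⟩ := h
    obtain ⟨i0, hi0⟩ := h1
    obtain ⟨j0, hj0⟩ : (Xᶜ : Finset (Fin k)).Nonempty := by
      rw [Finset.nonempty_iff_ne_empty]
      intro hc
      exact h2 (by simpa [Finset.compl_eq_empty_iff] using hc)
    rw [hcut]
    refine le_antisymm ?_ ?_
    · refine rank_le_one_outer A (fun _ => 1) (fun _ => 1) ?_
      rintro ⟨i, hi⟩ ⟨j, hj⟩
      have hij : i ≠ j := by
        rintro rfl
        exact (Finset.mem_compl.1 hj) hi
      simp [hA, hij]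
    · refine one_le_rank_of_ne_zero A ⟨i0, hi0⟩ ⟨j0, hj0⟩ ?_
      have hij : i0 ≠ j0 := by
        rintro rfl
        exact (Finset.mem_compl.1 hj0) hi0
      simp [hA, hij]


lemma cutRank_bip (m k : ℕ) (X : Finset (Fin m ⊕ Fin k)) :
    cutRank (completeBipartiteGraph (Fin m) (Fin k)) X =
      (if (∃ a, Sum.inl a ∈ X) ∧ (∃ b, Sum.inr b ∉ X) then 1 else 0) +
      (if (∃ b, Sum.inr b ∈ X) ∧ (∃ a, Sum.inl a ∉ X) then 1 else 0) := by
  classical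
  set G := completeBipartiteGraph (Fin m) (Fin k) with hG
  set A := (Matrix.of fun (i : X) (j : (Xᶜ : Finset (Fin m ⊕ Fin k))) =>
    if G.Adj i.1 j.1 then (1 : ZMod 2) else 0) with hA
  have hent : ∀ (i : X) (j : (Xᶜ : Finset (Fin m ⊕ Fin k))),
      A i j = if G.Adj i.1 j.1 then (1:ZMod 2) else 0 := fun i j => by rw [hA]; rfl
  have hcut : cutRank G X = A.rank :=
    cutRank_eq _ _ _ (fun i j => by rw [hent])
  rw [hcut]
  by_cases p1 : (∃ a, Sum.inl a ∈ X) ∧ (∃ b, Sum.inr b ∉ X) <;>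
    by_cases p2 : (∃ b, Sum.inr b ∈ X) ∧ (∃ a, Sum.inl a ∉ X)
  · obtain ⟨⟨a1, ha1⟩, ⟨b1, hb1⟩⟩ := p1
    obtain ⟨⟨b2, hb2⟩, ⟨a2, ha2⟩⟩ := p2
    rw [if_pos ⟨⟨a1, ha1⟩, ⟨b1, hb1⟩⟩, if_pos ⟨⟨b2, hb2⟩, ⟨a2, ha2⟩⟩]
    refine le_antisymm ?_ ?_
    · refine rank_le_two_outer A (fun i => if i.1.isLeft then 1 else 0)
        (fun i => if i.1.isLeft then 0 else 1)
        (fun j => if j.1.isLeft then 0 else 1)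
        (fun j => if j.1.isLeft then 1 else 0) ?_
      rintro ⟨(a | b), hi⟩ ⟨(a' | b'), hj⟩ <;> simp [hent, hG]
    · refine two_le_rank A ⟨Sum.inl a1, ha1⟩ ⟨Sum.inr b2, hb2⟩
        ⟨Sum.inr b1, Finset.mem_compl.2 hb1⟩ ⟨Sum.inl a2, Finset.mem_compl.2 ha2⟩
        ?_ ?_ ?_ ?_ <;> simp [hent, hG]
  · obtain ⟨⟨a1, ha1⟩, ⟨b1, hb1⟩⟩ := p1
    rw [if_pos ⟨⟨a1, ha1⟩, ⟨b1, hb1⟩⟩, if_neg p2]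
    refine le_antisymm ?_ ?_
    · refine rank_le_one_outer A (fun i => if i.1.isLeft then 1 else 0)
        (fun j => if j.1.isLeft then 0 else 1) ?_
      rintro ⟨(a | b), hi⟩ ⟨(a' | b'), hj⟩
      · simp [hent, hG]
      · simp [hent, hG]
      · exact absurd ⟨⟨b, hi⟩, ⟨a', Finset.mem_compl.1 hj⟩⟩ p2
      · simp [hent, hG]
    · refine one_le_rank_of_ne_zero A ⟨Sum.inl a1, ha1⟩ ⟨Sum.inr b1, Finset.mem_compl.2 hb1⟩ ?_
      simp [hent, hG]
  · obtain ⟨⟨b2, hb2⟩, ⟨a2, ha2⟩⟩ := p2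
    rw [if_neg p1, if_pos ⟨⟨b2, hb2⟩, ⟨a2, ha2⟩⟩]
    refine le_antisymm ?_ ?_
    · refine rank_le_one_outer A (fun i => if i.1.isLeft then 0 else 1)
        (fun j => if j.1.isLeft then 1 else 0) ?_
      rintro ⟨(a | b), hi⟩ ⟨(a' | b'), hj⟩
      · simp [hent, hG]
      · exact absurd ⟨⟨a, hi⟩, ⟨b', Finset.mem_compl.1 hj⟩⟩ p1
      · simp [hent, hG]
      · simp [hent, hG]
    · refine one_le_rank_of_ne_zero A ⟨Sum.inr b2, hb2⟩ ⟨Sum.inl a2, Finset.mem_compl.2 ha2⟩ ?_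
      simp [hent, hG]
  · rw [if_neg p1, if_neg p2]
    have hz : A = 0 := by
      ext ⟨(a | b), hi⟩ ⟨(a' | b'), hj⟩
      · simp [hent, hG]
      · exact absurd ⟨⟨a, hi⟩, ⟨b', Finset.mem_compl.1 hj⟩⟩ p1
      · exact absurd ⟨⟨b, hi⟩, ⟨a', Finset.mem_compl.1 hj⟩⟩ p2
      · simp [hent, hG]
    rw [hz, Matrix.rank_zero]

def finsetSumEquiv (α β : Type*) : Finset α × Finset β ≃ Finset (α ⊕ β) where
  toFun p := p.1.disjSum p.2
  invFun u := (u.toLeft, u.toRight)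
  left_inv p := by simp
  right_inv u := Finset.toLeft_disjSum_toRight

lemma count_mem (n : ℕ) :
    ∑ s : Finset (Fin n), (if ∃ a, a ∈ s then (1:ℝ) else 0) = 2 ^ n - 1 := by
  have h : ∀ s : Finset (Fin n),
      (if ∃ a, a ∈ s then (1:ℝ) else 0) = 1 - (if s = ∅ then (1:ℝ) else 0) := by
    intro s
    by_cases h : s = ∅
    · subst h; simp
    · have hp : ∃ a, a ∈ s := Finset.nonempty_iff_ne_empty.2 h
      rw [if_pos hp, if_neg h]; ring
  rw [Finset.sum_congr rfl fun s _ => h s, Finset.sum_sub_distrib, Finset.sum_const,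
    Finset.sum_ite_eq' Finset.univ (∅ : Finset (Fin n)) (fun _ => (1:ℝ))]
  simp [Fintype.card_finset]

lemma count_notmem (n : ℕ) :
    ∑ t : Finset (Fin n), (if ∃ b, b ∉ t then (1:ℝ) else 0) = 2 ^ n - 1 := by
  have h : ∀ t : Finset (Fin n),
      (if ∃ b, b ∉ t then (1:ℝ) else 0) = 1 - (if t = Finset.univ then (1:ℝ) else 0) := by
    intro t
    by_cases h : t = Finset.univ
    · subst h; simp
    · rw [if_pos ?_, if_neg h]
      · ring
      · by_contra hc
        push_neg at hc
        exact h (Finset.eq_univ_iff_forall.2 hc)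
  rw [Finset.sum_congr rfl fun t _ => h t, Finset.sum_sub_distrib, Finset.sum_const,
    Finset.sum_ite_eq' Finset.univ (Finset.univ : Finset (Fin n)) (fun _ => (1:ℝ))]
  simp [Fintype.card_finset]

lemma avg_top (k : ℕ) (hk : 1 ≤ k) :
    avgCutRank (⊤ : SimpleGraph (Fin k)) = 1 - (2 : ℝ) ^ (1 - (k : ℤ)) := by
  obtain ⟨k', rfl⟩ : ∃ k', k = k' + 1 := ⟨k - 1, by omega⟩
  rw [avgCutRank]
  have hne : (∅ : Finset (Fin (k' + 1))) ≠ Finset.univ := by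
    intro hc
    have h0 : (0 : Fin (k'+1)) ∈ (∅ : Finset (Fin (k'+1))) := hc.symm ▸ Finset.mem_univ 0
    simp at h0
  have hsum : ∑ X : Finset (Fin (k' + 1)), (cutRank (⊤ : SimpleGraph (Fin (k' + 1))) X : ℝ)
      = 2 ^ (k' + 1) - 2 := by
    have hterm : ∀ X : Finset (Fin (k' + 1)),
        (cutRank (⊤ : SimpleGraph (Fin (k' + 1))) X : ℝ)
          = 1 - (if X = ∅ then (1:ℝ) else 0) - (if X = Finset.univ then (1:ℝ) else 0) := by
      intro X
      rw [cutRank_top]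
      by_cases h1 : X = ∅ <;> by_cases h2 : X = Finset.univ
      · exact absurd (h1 ▸ h2) hne
      · simp [h1, h2, hne]
      · simp [h1, h2, Ne.symm hne]
      · simp [h1, h2]
    rw [Finset.sum_congr rfl fun X _ => hterm X]
    rw [Finset.sum_sub_distrib, Finset.sum_sub_distrib, Finset.sum_const,
      Finset.sum_ite_eq' Finset.univ (∅ : Finset (Fin (k'+1))) (fun _ => (1:ℝ)),
      Finset.sum_ite_eq' Finset.univ (Finset.univ : Finset (Fin (k'+1))) (fun _ => (1:ℝ))]
    simp [Fintype.card_finset]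
    ring
  rw [hsum]
  have hexp : (2 : ℝ) ^ (1 - ((k' + 1 : ℕ) : ℤ)) = ((2:ℝ) ^ k')⁻¹ := by
    rw [show (1 - ((k' + 1 : ℕ) : ℤ)) = -(k' : ℤ) by push_cast; ring, zpow_neg, zpow_natCast]
  rw [hexp, Fintype.card_fin]
  have h2 : (2:ℝ) ^ k' ≠ 0 := by positivity
  field_simp
  ring

lemma avg_bip (m k : ℕ) (hm : 1 ≤ m) (hk : 1 ≤ k) :
    avgCutRank (completeBipartiteGraph (Fin m) (Fin k)) =
      ((2 : ℝ) ^ m - 1) * ((2 : ℝ) ^ k - 1) / 2 ^ (m + k - 1) := by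
  rw [avgCutRank]
  have h1 : ∑ X : Finset (Fin m ⊕ Fin k),
      (if (∃ a, Sum.inl a ∈ X) ∧ (∃ b, Sum.inr b ∉ X) then (1:ℝ) else 0)
      = ((2:ℝ) ^ m - 1) * ((2:ℝ) ^ k - 1) := by
    rw [← Equiv.sum_comp (finsetSumEquiv (Fin m) (Fin k))
      (fun X => if (∃ a, Sum.inl a ∈ X) ∧ (∃ b, Sum.inr b ∉ X) then (1:ℝ) else 0)]
    rw [Fintype.sum_prod_type]
    have key : ∀ (s : Finset (Fin m)) (t : Finset (Fin k)),
        (if (∃ a, Sum.inl a ∈ (finsetSumEquiv (Fin m) (Fin k)) (s, t)) ∧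
            (∃ b, Sum.inr b ∉ (finsetSumEquiv (Fin m) (Fin k)) (s, t)) then (1:ℝ) else 0)
        = (if ∃ a, a ∈ s then (1:ℝ) else 0) * (if ∃ b, b ∉ t then (1:ℝ) else 0) := by
      intro s t
      simp only [finsetSumEquiv, Equiv.coe_fn_mk, Finset.inl_mem_disjSum,
        Finset.inr_mem_disjSum]
      by_cases hs : ∃ a, a ∈ s <;> by_cases ht : ∃ b, b ∉ t <;> simp [hs, ht]
    simp_rw [key]
    rw [← Finset.sum_mul_sum, count_mem, count_notmem]
  have h2 : ∑ X : Finset (Fin m ⊕ Fin k),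
      (if (∃ b, Sum.inr b ∈ X) ∧ (∃ a, Sum.inl a ∉ X) then (1:ℝ) else 0)
      = ((2:ℝ) ^ k - 1) * ((2:ℝ) ^ m - 1) := by
    rw [← Equiv.sum_comp (finsetSumEquiv (Fin m) (Fin k))
      (fun X => if (∃ b, Sum.inr b ∈ X) ∧ (∃ a, Sum.inl a ∉ X) then (1:ℝ) else 0)]
    rw [Fintype.sum_prod_type]
    have key : ∀ (s : Finset (Fin m)) (t : Finset (Fin k)),
        (if (∃ b, Sum.inr b ∈ (finsetSumEquiv (Fin m) (Fin k)) (s, t)) ∧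
            (∃ a, Sum.inl a ∉ (finsetSumEquiv (Fin m) (Fin k)) (s, t)) then (1:ℝ) else 0)
        = (if ∃ a, a ∉ s then (1:ℝ) else 0) * (if ∃ b, b ∈ t then (1:ℝ) else 0) := by
      intro s t
      simp only [finsetSumEquiv, Equiv.coe_fn_mk, Finset.inl_mem_disjSum,
        Finset.inr_mem_disjSum]
      by_cases hs : ∃ a, a ∉ s <;> by_cases ht : ∃ b, b ∈ t <;> simp [hs, ht] <;> tauto
    simp_rw [key]
    rw [← Finset.sum_mul_sum, count_notmem, count_mem]
    ring
  have hsum : ∑ X : Finset (Fin m ⊕ Fin k),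
      (cutRank (completeBipartiteGraph (Fin m) (Fin k)) X : ℝ)
      = 2 * (((2:ℝ) ^ m - 1) * ((2:ℝ) ^ k - 1)) := by
    have hterm : ∀ X : Finset (Fin m ⊕ Fin k),
        (cutRank (completeBipartiteGraph (Fin m) (Fin k)) X : ℝ)
        = (if (∃ a, Sum.inl a ∈ X) ∧ (∃ b, Sum.inr b ∉ X) then (1:ℝ) else 0)
          + (if (∃ b, Sum.inr b ∈ X) ∧ (∃ a, Sum.inl a ∉ X) then (1:ℝ) else 0) := by
      intro X
      rw [cutRank_bip]
      by_cases p1 : (∃ a, Sum.inl a ∈ X) ∧ (∃ b, Sum.inr b ∉ X) <;>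
        by_cases p2 : (∃ b, Sum.inr b ∈ X) ∧ (∃ a, Sum.inl a ∉ X) <;>
        simp [p1, p2] <;> norm_num
    rw [Finset.sum_congr rfl fun X _ => hterm X, Finset.sum_add_distrib, h1, h2]
    ring
  rw [hsum]
  obtain ⟨m', rfl⟩ : ∃ m', m = m' + 1 := ⟨m - 1, by omega⟩
  have hcard : Fintype.card (Fin (m' + 1) ⊕ Fin k) = m' + 1 + k := by simp
  rw [hcard, show m' + 1 + k - 1 = m' + k by omega]
  have h2 : (2:ℝ) ^ (m' + k) ≠ 0 := by positivity
  have hpow : (2:ℝ) ^ (m' + 1 + k) = 2 * 2 ^ (m' + k) := by ring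
  rw [hpow]
  field_simp


/-- `Eρ(K_k) = 1 − 2^(1−k)`,
`Eρ(K_{m,k}) = (2^m − 1)(2^k − 1)/2^(m+k−1)`, and in particular
`Eρ(K_{1,k}) = 1 − 2^(−k) = Eρ(K_{k+1})`. -/
theorem stmt9 (m k : ℕ) (hm : 1 ≤ m) (hk : 1 ≤ k) :
    avgCutRank (⊤ : SimpleGraph (Fin k)) = 1 - (2 : ℝ) ^ (1 - (k : ℤ)) ∧
    avgCutRank (completeBipartiteGraph (Fin m) (Fin k)) =
      ((2 : ℝ) ^ m - 1) * ((2 : ℝ) ^ k - 1) / 2 ^ (m + k - 1) ∧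
    avgCutRank (completeBipartiteGraph (Fin 1) (Fin k)) = 1 - (2 : ℝ) ^ (-(k : ℤ)) ∧
    avgCutRank (⊤ : SimpleGraph (Fin (k + 1))) = 1 - (2 : ℝ) ^ (-(k : ℤ)) := by
  refine ⟨avg_top k hk, avg_bip m k hm hk, ?_, ?_⟩
  · rw [avg_bip 1 k le_rfl hk]
    rw [show (1 : ℕ) + k - 1 = k by omega]
    have hexp : (2:ℝ) ^ (-(k:ℤ)) = ((2:ℝ) ^ k)⁻¹ := by rw [zpow_neg, zpow_natCast]
    rw [hexp]
    have h2 : (2:ℝ) ^ k ≠ 0 := by positivity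
    field_simp
    ring
  · rw [avg_top (k + 1) (by omega)]
    congr 1
    rw [show (1 - ((k + 1 : ℕ) : ℤ)) = -(k : ℤ) by push_cast; ring]


end AvgCutRank
end

section
/- Let G be a finite simple graph in which u₁, …, u_k (k ≥ 1) are pairwise false twins, and let d = deg_G(u₁). Then Eρ(G − u₁) ≥ Eρ(G) − (2^d − 1)/2^{k+d−1}. In particular, if deg_G(u₁) = 1 then Eρ(G − u₁) ≥ Eρ(G) − 2^{−k}. -/
open scoped Classical

namespace AvgCutRank

variable {V : Type*} {W : Type*}

/-! ### Auxiliary lemmas for Statement 12 -/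

open Matrix

section RankAux

variable {F : Type*} [Field F] {m n n' m' : Type*} [Fintype m] [Fintype n] [Fintype n'] [Fintype m']

open Matrix in
lemma rank_reindex_rect (A : Matrix m n F) (e₁ : m ≃ m') (e₂ : n ≃ n') :
    ((Matrix.reindex e₁ e₂) A).rank = A.rank := by
  rw [Matrix.rank, Matrix.rank, Matrix.mulVecLin_reindex, LinearMap.range_comp,
    LinearMap.range_comp, LinearEquiv.range, Submodule.map_top, LinearEquiv.finrank_map_eq]

open Matrix in
lemma rank_le_of_cols_span (A : Matrix m n F) (B : Matrix m n' F)
    (h : ∀ j, Aᵀ j ∈ Submodule.span F (Set.range Bᵀ)) : A.rank ≤ B.rank := by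
  rw [Matrix.rank_eq_finrank_span_cols, Matrix.rank_eq_finrank_span_cols]
  exact Submodule.finrank_mono (Submodule.span_le.2 (by rintro x ⟨j, rfl⟩; exact h j))

open Matrix in
lemma rank_le_add_one_of_cols (A : Matrix m n F) (B : Matrix m n' F) (c : m → F)
    (h : ∀ j, Aᵀ j = c ∨ ∃ j', Aᵀ j = Bᵀ j') : A.rank ≤ B.rank + 1 := by
  rw [Matrix.rank_eq_finrank_span_cols, Matrix.rank_eq_finrank_span_cols]
  have hle : Submodule.span F (Set.range Aᵀ) ≤
      Submodule.span F {c} ⊔ Submodule.span F (Set.range Bᵀ) := by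
    rw [← Submodule.span_insert]
    refine Submodule.span_mono ?_
    rintro x ⟨j, rfl⟩
    rcases h j with h1 | ⟨j', h2⟩
    · exact Or.inl h1
    · exact Or.inr ⟨j', h2.symm⟩
  have h1 : Module.finrank F (Submodule.span F ({c} : Set (m → F))) ≤ 1 := by
    by_cases hc : c = 0
    · subst hc
      rw [Submodule.span_zero_singleton]
      simp
    · rw [finrank_span_singleton hc]
  calc Module.finrank F (Submodule.span F (Set.range Aᵀ))
      ≤ Module.finrank F ↥(Submodule.span F ({c} : Set (m → F)) ⊔
          Submodule.span F (Set.range Bᵀ)) := Submodule.finrank_mono hle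
    _ ≤ Module.finrank F (Submodule.span F ({c} : Set (m → F))) +
        Module.finrank F (Submodule.span F (Set.range Bᵀ)) :=
        Submodule.finrank_add_le_finrank_add_finrank _ _
    _ ≤ _ := by
      have h2 : Module.finrank F (Submodule.span F (Set.range Bᵀ)) =
          Module.finrank F (Submodule.span F (Set.range B.col)) := rfl
      omega

end RankAux

section CutRankAux

variable {V : Type*} [Fintype V] [DecidableEq V]

lemma cutRank_compl (G : SimpleGraph V) (S : Finset V) : cutRank G Sᶜ = cutRank G S := by
  let e : ((Sᶜᶜ : Finset V) : Type _) ≃ ((S : Finset V) : Type _) :=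
    Equiv.subtypeEquivRight (by intro x; simp)
  have hM : (Matrix.of fun (i : (Sᶜ : Finset V)) (j : ((Sᶜᶜ : Finset V))) =>
      if G.Adj i.1 j.1 then (1 : ZMod 2) else 0)
      = Matrix.reindex (Equiv.refl _) e.symm
        (Matrix.of fun (i : (S : Finset V)) (j : ((Sᶜ : Finset V))) =>
          if G.Adj i.1 j.1 then (1 : ZMod 2) else 0)ᵀ := by
    ext i j
    have hval : ((e j : (S : Finset V)) : V) = (j : V) := by
      rfl
    simp only [Matrix.reindex_apply, Matrix.submatrix_apply, Matrix.transpose_apply,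
      Matrix.of_apply, Equiv.refl_symm, Equiv.refl_apply, Equiv.symm_symm, hval]
    rw [G.adj_comm]
  show (Matrix.of fun (i : (Sᶜ : Finset V)) (j : ((Sᶜᶜ : Finset V))) =>
      if G.Adj i.1 j.1 then (1 : ZMod 2) else 0).rank = _
  rw [hM, rank_reindex_rect, Matrix.rank_transpose]
  rfl

/-- Key deletion lemma: the cut-rank of `X'` (viewed in `G`) is at most the cut-rank of
`X'` in `G - v` plus `c`, where `c` may be taken `0` when either some vertex outside `X'`
has the same neighborhood as `v`, or `v` has no neighbor in `X'`. -/
lemma cutRank_image_le (G : SimpleGraph V) (v : V) (X' : Finset {w : V // w ≠ v}) (c : ℕ)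
    (hc : c = 1 ∨
      (∃ w : {w : V // w ≠ v}, w ∉ X' ∧ ∀ z, G.Adj v z ↔ G.Adj w.1 z) ∨
      (∀ w : {w : V // w ≠ v}, w ∈ X' → ¬ G.Adj v w.1)) :
    cutRank G (X'.image Subtype.val) ≤ cutRank (deleteVert G v) X' + c := by
  set X : Finset V := X'.image Subtype.val with hX
  set A : Matrix ((X : Finset V) : Type _) ((Xᶜ : Finset V) : Type _) (ZMod 2) :=
    Matrix.of fun i j => if G.Adj i.1 j.1 then (1 : ZMod 2) else 0 with hA
  set B : Matrix ((X' : Finset _) : Type _) ((X'ᶜ : Finset _) : Type _) (ZMod 2) :=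
    Matrix.of fun i j => if (deleteVert G v).Adj i.1 j.1 then (1 : ZMod 2) else 0 with hB
  have hne : ∀ i : (X : Finset V), (i : V) ≠ v := by
    intro i
    obtain ⟨a, _, ha⟩ := Finset.mem_image.1 i.2
    exact ha ▸ a.2
  have hmem' : ∀ i : (X : Finset V), (⟨(i : V), hne i⟩ : {w : V // w ≠ v}) ∈ X' := by
    intro i
    obtain ⟨a, haX, ha⟩ := Finset.mem_image.1 i.2
    have : (⟨(i : V), hne i⟩ : {w : V // w ≠ v}) = a := Subtype.ext ha.symm
    rw [this]; exact haX
  let eR : ((X : Finset V) : Type _) ≃ ((X' : Finset _) : Type _) :=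
    { toFun := fun i => ⟨⟨(i : V), hne i⟩, hmem' i⟩
      invFun := fun a => ⟨a.1.1, Finset.mem_image_of_mem _ a.2⟩
      left_inv := fun i => Subtype.ext rfl
      right_inv := fun a => Subtype.ext (Subtype.ext rfl) }
  set B2 : Matrix ((X : Finset V) : Type _) ((X'ᶜ : Finset _) : Type _) (ZMod 2) :=
    B.submatrix eR id with hB2
  have hrankB2 : B2.rank = B.rank := by
    have : B2 = Matrix.reindex eR.symm (Equiv.refl _) B := by
      ext i j
      simp [hB2, Matrix.reindex_apply, Matrix.submatrix_apply]
    rw [this, rank_reindex_rect]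
  set c0 : ((X : Finset V) : Type _) → ZMod 2 :=
    fun i => if G.Adj i.1 v then (1 : ZMod 2) else 0 with hc0
  have hcols : ∀ j : ((Xᶜ : Finset V) : Type _), Aᵀ j = c0 ∨ ∃ j', Aᵀ j = B2ᵀ j' := by
    intro j
    by_cases hj : (j : V) = v
    · left
      funext i
      simp only [hA, hc0, Matrix.transpose_apply, Matrix.of_apply, hj]
    · right
      have hjX : (⟨(j : V), hj⟩ : {w : V // w ≠ v}) ∈ X'ᶜ := by
        rw [Finset.mem_compl]
        intro hmem
        have hj2 : (j : V) ∈ X := Finset.mem_image_of_mem _ hmem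
        have := j.2
        rw [Finset.mem_compl] at this
        exact this hj2
      refine ⟨⟨⟨(j : V), hj⟩, hjX⟩, ?_⟩
      funext i
      simp only [hA, hB2, hB, Matrix.transpose_apply, Matrix.of_apply,
        Matrix.submatrix_apply, id_eq]
      rfl
  have hAR : cutRank G X = A.rank := rfl
  have hBR : cutRank (deleteVert G v) X' = B.rank := rfl
  rcases hc with rfl | hc
  · have := rank_le_add_one_of_cols A B2 c0 hcols
    rw [hAR, hBR, ← hrankB2]
    exact this
  · have hc0mem : c0 ∈ Submodule.span (ZMod 2) (Set.range B2ᵀ) := by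
      rcases hc with ⟨w, hw, hAdj⟩ | hempty
      · have hwc : w ∈ X'ᶜ := Finset.mem_compl.2 hw
        have : c0 = B2ᵀ (⟨w, hwc⟩ : {x : {w : V // w ≠ v} // x ∈ X'ᶜ}) := by
          funext i
          simp only [hc0, hB2, hB, Matrix.transpose_apply, Matrix.of_apply,
            Matrix.submatrix_apply, id_eq]
          have h1 : G.Adj (i : V) v ↔
              (deleteVert G v).Adj (eR i).1 w := by
            show G.Adj (i : V) v ↔ G.Adj (i : V) w.1
            rw [G.adj_comm (i : V) v, G.adj_comm (i : V) w.1, hAdj (i : V)]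
          rw [if_congr h1 rfl rfl]
        rw [this]
        exact Submodule.subset_span ⟨_, rfl⟩
      · have : c0 = 0 := by
          funext i
          simp only [hc0]
          rw [if_neg, Pi.zero_apply]
          intro hadj
          exact hempty ⟨(i : V), hne i⟩ (hmem' i) (hadj.symm)
        rw [this]
        exact Submodule.zero_mem _
    have hle := rank_le_of_cols_span A B2 (by
      intro j
      rcases hcols j with h | ⟨j', h⟩
      · rw [h]; exact hc0mem
      · rw [h]; exact Submodule.subset_span ⟨j', rfl⟩)
    rw [hAR, hBR]
    exact le_trans (hle.trans hrankB2.le) (Nat.le_add_right _ _)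

/-- Image of the subtype filter is the erase. -/
lemma image_filter_mem (v : V) (Y : Finset V) :
    ((Finset.univ.filter fun a : {w : V // w ≠ v} => a.1 ∈ Y).image Subtype.val)
      = Y.erase v := by
  ext w
  simp only [Finset.mem_image, Finset.mem_filter, Finset.mem_univ, true_and,
    Finset.mem_erase]
  constructor
  · rintro ⟨a, ha, rfl⟩
    exact ⟨a.2, ha⟩
  · rintro ⟨hw, hwY⟩
    exact ⟨⟨w, hw⟩, hwY, rfl⟩

lemma mem_image_val_iff (v : V) (X' : Finset {w : V // w ≠ v}) (a : {w : V // w ≠ v}) :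
    a.1 ∈ X'.image Subtype.val ↔ a ∈ X' := by
  rw [Finset.mem_image]
  constructor
  · rintro ⟨b, hb, hba⟩
    rwa [show b = a from Subtype.ext hba] at hb
  · intro h; exact ⟨a, h, rfl⟩

lemma compl_insert_image (v : V) (X' : Finset {w : V // w ≠ v}) :
    (insert v (X'.image Subtype.val))ᶜ = X'ᶜ.image Subtype.val := by
  ext w
  simp only [Finset.mem_compl, Finset.mem_insert]
  constructor
  · intro h
    push_neg at h
    obtain ⟨hwv, hwX⟩ := h
    have : (⟨w, hwv⟩ : {w : V // w ≠ v}) ∈ X'ᶜ := by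
      rw [Finset.mem_compl]
      intro hm
      exact hwX (Finset.mem_image_of_mem _ hm)
    exact Finset.mem_image_of_mem _ this
  · intro h hmem
    rw [Finset.mem_image] at h
    obtain ⟨a, ha, rfl⟩ := h
    rcases hmem with h1 | h1
    · exact a.2 h1
    · exact Finset.mem_compl.1 ha ((mem_image_val_iff v X' a).1 h1)

lemma sum_split_vertex {M : Type*} [AddCommMonoid M] (v : V) (f : Finset V → M) :
    ∑ X : Finset V, f X =
      ∑ X' : Finset {w : V // w ≠ v},
        (f (X'.image Subtype.val) + f (insert v (X'.image Subtype.val))) := by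
  have h1 : ∑ X : Finset V, f X
      = (∑ X ∈ Finset.univ.filter (fun X : Finset V => v ∈ X), f X)
      + ∑ X ∈ Finset.univ.filter (fun X : Finset V => ¬ v ∈ X), f X :=
    (Finset.sum_filter_add_sum_filter_not _ _ _).symm
  have h2 : ∑ X ∈ Finset.univ.filter (fun X : Finset V => v ∈ X), f X
      = ∑ X ∈ Finset.univ.filter (fun X : Finset V => ¬ v ∈ X), f (insert v X) := by
    refine Finset.sum_nbij' (fun X => X.erase v) (fun X => insert v X) ?_ ?_ ?_ ?_ ?_
    · intro a ha
      simp only [Finset.mem_filter, Finset.mem_univ, true_and] at ha ⊢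
      exact Finset.notMem_erase _ _
    · intro a ha
      simp only [Finset.mem_filter, Finset.mem_univ, true_and] at ha ⊢
      exact Finset.mem_insert_self _ _
    · intro a ha
      simp only [Finset.mem_filter, Finset.mem_univ, true_and] at ha
      exact Finset.insert_erase ha
    · intro a ha
      simp only [Finset.mem_filter, Finset.mem_univ, true_and] at ha
      exact Finset.erase_insert ha
    · intro a ha
      simp only [Finset.mem_filter, Finset.mem_univ, true_and] at ha
      rw [Finset.insert_erase ha]
  have h3 : ∀ g : Finset V → M,
      ∑ X ∈ Finset.univ.filter (fun X : Finset V => ¬ v ∈ X), g X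
      = ∑ X' : Finset {w : V // w ≠ v}, g (X'.image Subtype.val) := by
    intro g
    refine Finset.sum_nbij'
      (fun Y => Finset.univ.filter fun a : {w : V // w ≠ v} => a.1 ∈ Y)
      (fun X' => X'.image Subtype.val) ?_ ?_ ?_ ?_ ?_
    · intro a _; exact Finset.mem_univ _
    · intro X' _
      simp only [Finset.mem_filter, Finset.mem_univ, true_and]
      intro hmem
      rw [Finset.mem_image] at hmem
      obtain ⟨a, _, ha⟩ := hmem
      exact a.2 ha
    · intro Y hY
      simp only [Finset.mem_filter, Finset.mem_univ, true_and] at hY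
      simp only [image_filter_mem, Finset.erase_eq_of_notMem hY]
    · intro X' _
      ext a
      simp only [Finset.mem_filter, Finset.mem_univ, true_and]
      exact mem_image_val_iff v X' a
    · intro Y hY
      simp only [Finset.mem_filter, Finset.mem_univ, true_and] at hY
      simp only [image_filter_mem, Finset.erase_eq_of_notMem hY]
  rw [h1, h2, ← Finset.sum_add_distrib]
  rw [h3 (fun X => f (insert v X) + f X)]
  exact Finset.sum_congr rfl (fun X' _ => add_comm _ _)

lemma card_subsets_between {α : Type*} [Fintype α] [DecidableEq α] (S B : Finset α)
    (h : S ⊆ B) :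
    (Finset.univ.filter fun X : Finset α => S ⊆ X ∧ X ⊆ B).card = 2 ^ (B.card - S.card) := by
  rw [← Finset.card_sdiff_of_subset h, ← Finset.card_powerset]
  refine Finset.card_nbij' (fun X => X \ S) (fun Y => Y ∪ S) ?_ ?_ ?_ ?_
  · intro X hX
    simp only [Finset.mem_coe, Finset.mem_filter, Finset.mem_univ, true_and] at hX
    rw [Finset.mem_coe, Finset.mem_powerset]
    intro a ha
    rw [Finset.mem_sdiff] at ha ⊢
    exact ⟨hX.2 ha.1, ha.2⟩
  · intro Y hY
    rw [Finset.mem_coe, Finset.mem_powerset] at hY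
    simp only [Finset.mem_coe, Finset.mem_filter, Finset.mem_univ, true_and]
    refine ⟨Finset.subset_union_right, Finset.union_subset ?_ h⟩
    exact hY.trans (Finset.sdiff_subset)
  · intro X hX
    simp only [Finset.mem_coe, Finset.mem_filter, Finset.mem_univ, true_and] at hX
    exact Finset.sdiff_union_of_subset hX.1
  · intro Y hY
    rw [Finset.mem_coe, Finset.mem_powerset] at hY
    ext a
    simp only [Finset.mem_sdiff, Finset.mem_union]
    constructor
    · rintro ⟨h1 | h1, h2⟩
      · exact h1
      · exact absurd h1 h2
    · intro ha
      exact ⟨Or.inl ha, fun hs => (Finset.mem_sdiff.1 (hY ha)).2 hs⟩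

end CutRankAux

/-- If `u 0, …, u (k−1)` (`k ≥ 1`) are pairwise false twins in `G`
and `d` is the degree of `u 0`, then `Eρ(G − u 0) ≥ Eρ(G) − (2^d − 1)/2^(k+d−1)`;
in particular if `d = 1` then `Eρ(G − u 0) ≥ Eρ(G) − 2^(−k)`. -/
theorem stmt12 {V : Type} [Fintype V] [DecidableEq V] (G : SimpleGraph V)
    (k : ℕ) (hk : 1 ≤ k) (u : Fin k → V) (hinj : Function.Injective u)
    (htwins : ∀ i j : Fin k, i ≠ j →
      ¬G.Adj (u i) (u j) ∧ G.neighborSet (u i) = G.neighborSet (u j)) :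
    avgCutRank G - ((2 : ℝ) ^ (G.neighborSet (u ⟨0, hk⟩)).ncard - 1) /
        2 ^ (k + (G.neighborSet (u ⟨0, hk⟩)).ncard - 1) ≤
      avgCutRank (deleteVert G (u ⟨0, hk⟩)) ∧
    ((G.neighborSet (u ⟨0, hk⟩)).ncard = 1 →
      avgCutRank G - ((2 : ℝ) ^ k)⁻¹ ≤ avgCutRank (deleteVert G (u ⟨0, hk⟩))) := by
  classical
  set v : V := u ⟨0, hk⟩ with hv
  set d : ℕ := (G.neighborSet v).ncard with hd
  set TV : Finset V := Finset.univ.filter (fun w => ∃ i : Fin k, u i = w) with hTV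
  set T' : Finset {w : V // w ≠ v} := Finset.univ.filter (fun a => a.1 ∈ TV) with hT'
  set N' : Finset {w : V // w ≠ v} := Finset.univ.filter (fun a => G.Adj v a.1) with hN'
  set m : ℕ := Fintype.card {w : V // w ≠ v} with hm
  set t : ℕ := T'.card with ht
  -- cardinality of the vertex type
  have hcardV : Fintype.card V = m + 1 := by
    have h1 : Fintype.card {w : V // w ≠ v} = (Finset.univ.erase v).card := by
      rw [Fintype.card_subtype, Finset.filter_ne']
    have h2 : (Finset.univ.erase v).card = Fintype.card V - 1 := by
      rw [Finset.card_erase_of_mem (Finset.mem_univ v), Finset.card_univ]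
    have h3 : 1 ≤ Fintype.card V := Fintype.card_pos_iff.2 ⟨v⟩
    omega
  -- the degree of v
  have hdeg : N'.card = d := by
    have hNfilter : N' = Finset.univ.filter (fun a : {w : V // w ≠ v} =>
        a.1 ∈ G.neighborFinset v) := by
      rw [hN']
      ext a
      simp [SimpleGraph.mem_neighborFinset]
    have himg : N'.image Subtype.val = (G.neighborFinset v).erase v := by
      rw [hNfilter, image_filter_mem]
    have hverase : (G.neighborFinset v).erase v = G.neighborFinset v :=
      Finset.erase_eq_of_notMem (by simp)
    have hcardim : (N'.image Subtype.val).card = N'.card :=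
      Finset.card_image_of_injective _ Subtype.val_injective
    have hncard : (G.neighborSet v).ncard = (G.neighborFinset v).card := by
      rw [SimpleGraph.neighborFinset_def, Set.ncard_eq_toFinset_card']
    rw [hd, hncard, ← hverase, ← himg, hcardim]
  -- the number of twins other than v
  have htcard : t + 1 = k := by
    have hTVimg : TV = Finset.univ.image u := by
      rw [hTV]
      ext w
      simp [eq_comm]
    have hTVcard : TV.card = k := by
      rw [hTVimg, Finset.card_image_of_injective _ hinj, Finset.card_univ, Fintype.card_fin]
    have hvTV : v ∈ TV := by
      rw [hTV, Finset.mem_filter]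
      exact ⟨Finset.mem_univ _, ⟨⟨0, hk⟩, rfl⟩⟩
    have himgT : T'.image Subtype.val = TV.erase v := by
      rw [hT', image_filter_mem]
    have hcardim : (T'.image Subtype.val).card = T'.card :=
      Finset.card_image_of_injective _ Subtype.val_injective
    have herase : (TV.erase v).card = TV.card - 1 :=
      Finset.card_erase_of_mem hvTV
    have hk' : 1 ≤ TV.card := by omega
    rw [ht, ← hcardim, himgT]
    omega
  -- T' and N' are disjoint
  have hdisj : Disjoint T' N' := by
    rw [Finset.disjoint_left]
    intro a haT haN
    have haTV : a.1 ∈ TV := (Finset.mem_filter.1 haT).2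
    obtain ⟨i, hi⟩ := (Finset.mem_filter.1 ((hTV ▸ haTV : a.1 ∈ _))).2
    have hine : i ≠ ⟨0, hk⟩ := by
      intro h
      exact a.2 (by rw [← hi, h])
    have hnadj : ¬ G.Adj (u ⟨0, hk⟩) (u i) := (htwins ⟨0, hk⟩ i (Ne.symm hine)).1
    have hadj : G.Adj v a.1 := (Finset.mem_filter.1 haN).2
    rw [← hi] at hadj
    exact hnadj hadj
  have hsubTN : T' ⊆ N'ᶜ := by
    intro a ha
    rw [Finset.mem_compl]
    exact Finset.disjoint_left.1 hdisj ha
  have hmge : t + d ≤ m := by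
    have h1 : (T' ∪ N').card = t + d := by
      rw [Finset.card_union_of_disjoint hdisj, ht, hdeg]
    have h2 : (T' ∪ N').card ≤ m := by
      rw [hm, ← Finset.card_univ]
      exact Finset.card_le_card (Finset.subset_univ _)
    omega
  obtain ⟨e, hme⟩ : ∃ e, m = t + d + e := ⟨m - (t + d), by omega⟩
  -- counting
  set C : ℕ := (Finset.univ.filter fun Y : Finset {w : V // w ≠ v} =>
    T' ⊆ Y ∧ (Y ∩ N').Nonempty).card with hC
  have hC1 : (Finset.univ.filter fun Y : Finset {w : V // w ≠ v} => T' ⊆ Y).card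
      = 2 ^ (d + e) := by
    have h0 := card_subsets_between T' (Finset.univ : Finset {w : V // w ≠ v})
      (Finset.subset_univ _)
    simp only [Finset.subset_univ, and_true, Finset.card_univ] at h0
    rw [h0, ← hm, ← ht]
    congr 1
    omega
  have hC2 : (Finset.univ.filter fun Y : Finset {w : V // w ≠ v} =>
      T' ⊆ Y ∧ Y ⊆ N'ᶜ).card = 2 ^ e := by
    rw [card_subsets_between _ _ hsubTN, Finset.card_compl, ← hm, hdeg, ← ht]
    congr 1
    omega
  have hCC : C + 2 ^ e = 2 ^ (d + e) := by
    rw [← hC2, ← hC1, hC]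
    have hsplit := Finset.card_filter_add_card_filter_not
      (s := Finset.univ.filter fun Y : Finset {w : V // w ≠ v} => T' ⊆ Y)
      (p := fun Y => (Y ∩ N').Nonempty)
    rw [Finset.filter_filter, Finset.filter_filter] at hsplit
    have hpred : ∀ Y : Finset {w : V // w ≠ v},
        (T' ⊆ Y ∧ ¬ (Y ∩ N').Nonempty) ↔ (T' ⊆ Y ∧ Y ⊆ N'ᶜ) := by
      intro Y
      apply and_congr_right
      intro _
      rw [Finset.not_nonempty_iff_eq_empty]
      constructor
      · intro hemp a haY
        rw [Finset.mem_compl]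
        intro haN
        have : a ∈ Y ∩ N' := Finset.mem_inter.2 ⟨haY, haN⟩
        rw [hemp] at this
        exact absurd this (Finset.notMem_empty a)
      · intro hsub2
        rw [Finset.eq_empty_iff_forall_notMem]
        intro a ha
        have h1 := Finset.mem_inter.1 ha
        exact (Finset.mem_compl.1 (hsub2 h1.1)) h1.2
    simp only [hpred] at hsplit
    exact hsplit
  -- per-subset inequalities
  set cN : Finset {w : V // w ≠ v} → ℕ :=
    fun Y => if T' ⊆ Y ∧ (Y ∩ N').Nonempty then 1 else 0 with hcN
  have hkey : ∀ Y : Finset {w : V // w ≠ v},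
      cutRank G (Y.image Subtype.val) ≤ cutRank (deleteVert G v) Y + cN Y := by
    intro Y
    by_cases hcond : T' ⊆ Y ∧ (Y ∩ N').Nonempty
    · have h1 : cN Y = 1 := by rw [hcN]; exact if_pos hcond
      rw [h1]
      exact cutRank_image_le G v Y 1 (Or.inl rfl)
    · have h0 : cN Y = 0 := by rw [hcN]; exact if_neg hcond
      rw [h0]
      apply cutRank_image_le G v Y 0
      right
      rw [not_and_or] at hcond
      rcases hcond with hT | hN
      · left
        obtain ⟨a, haT, haY⟩ := Finset.not_subset.1 hT
        have haTV : a.1 ∈ TV := (Finset.mem_filter.1 haT).2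
        obtain ⟨i, hi⟩ := (Finset.mem_filter.1 ((hTV ▸ haTV : a.1 ∈ _))).2
        have hine : i ≠ ⟨0, hk⟩ := by
          intro h
          exact a.2 (by rw [← hi, h])
        have hNS := (htwins ⟨0, hk⟩ i (Ne.symm hine)).2
        refine ⟨a, haY, fun z => ?_⟩
        rw [← SimpleGraph.mem_neighborSet, ← SimpleGraph.mem_neighborSet, ← hi, hv, hNS]
      · right
        intro w hw hadj
        apply hN
        exact ⟨w, Finset.mem_inter.2 ⟨hw,
          Finset.mem_filter.2 ⟨Finset.mem_univ _, hadj⟩⟩⟩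
  have hkey2 : ∀ Y : Finset {w : V // w ≠ v},
      cutRank G (insert v (Y.image Subtype.val)) ≤ cutRank (deleteVert G v) Y + cN Yᶜ := by
    intro Y
    have h1 : insert v (Y.image Subtype.val) = (Yᶜ.image Subtype.val)ᶜ := by
      rw [← compl_insert_image, compl_compl]
    calc cutRank G (insert v (Y.image Subtype.val))
        = cutRank G (Yᶜ.image Subtype.val) := by rw [h1, cutRank_compl]
      _ ≤ cutRank (deleteVert G v) Yᶜ + cN Yᶜ := hkey Yᶜ
      _ = cutRank (deleteVert G v) Y + cN Yᶜ := by rw [cutRank_compl]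
  -- sums
  have hsumCR : (∑ Y : Finset {w : V // w ≠ v}, (cN Y : ℝ)) = C := by
    rw [hcN, hC]
    push_cast
    rw [Finset.sum_boole]
  have hsumCcR : (∑ Y : Finset {w : V // w ≠ v}, (cN Yᶜ : ℝ)) = C := by
    rw [← hsumCR]
    exact Equiv.sum_comp
      (⟨fun Y => Yᶜ, fun Y => Yᶜ, fun Y => compl_compl Y,
        fun Y => compl_compl Y⟩ : Finset {w : V // w ≠ v} ≃ Finset {w : V // w ≠ v})
      (fun Y => (cN Y : ℝ))
  have hSGle : (∑ X : Finset V, (cutRank G X : ℝ))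
      ≤ 2 * (∑ Y : Finset {w : V // w ≠ v}, (cutRank (deleteVert G v) Y : ℝ)) + 2 * C := by
    rw [sum_split_vertex v (fun X => (cutRank G X : ℝ))]
    calc ∑ Y : Finset {w : V // w ≠ v}, ((cutRank G (Y.image Subtype.val) : ℝ)
          + (cutRank G (insert v (Y.image Subtype.val)) : ℝ))
        ≤ ∑ Y : Finset {w : V // w ≠ v},
            (2 * (cutRank (deleteVert G v) Y : ℝ) + ((cN Y : ℝ) + (cN Yᶜ : ℝ))) := by
          refine Finset.sum_le_sum (fun Y _ => ?_)
          have h1 := hkey Y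
          have h2 := hkey2 Y
          have h1' : (cutRank G (Y.image Subtype.val) : ℝ)
              ≤ (cutRank (deleteVert G v) Y : ℝ) + (cN Y : ℝ) := by exact_mod_cast h1
          have h2' : (cutRank G (insert v (Y.image Subtype.val)) : ℝ)
              ≤ (cutRank (deleteVert G v) Y : ℝ) + (cN Yᶜ : ℝ) := by exact_mod_cast h2
          linarith
      _ = 2 * (∑ Y : Finset {w : V // w ≠ v}, (cutRank (deleteVert G v) Y : ℝ))
          + ((∑ Y : Finset {w : V // w ≠ v}, (cN Y : ℝ))
          + (∑ Y : Finset {w : V // w ≠ v}, (cN Yᶜ : ℝ))) := by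
          rw [Finset.sum_add_distrib, Finset.sum_add_distrib, Finset.mul_sum]
      _ = _ := by rw [hsumCR, hsumCcR]; ring
  -- assembling
  have hCR : (C : ℝ) = 2 ^ (d + e) - 2 ^ e := by
    have h0 : ((C + 2 ^ e : ℕ) : ℝ) = ((2 ^ (d + e) : ℕ) : ℝ) := by rw [hCC]
    push_cast at h0
    linarith
  have havgG : avgCutRank G = (∑ X : Finset V, (cutRank G X : ℝ)) / 2 ^ (m + 1) := by
    rw [avgCutRank, hcardV]
  have havgG' : avgCutRank (deleteVert G v)
      = (∑ Y : Finset {w : V // w ≠ v}, (cutRank (deleteVert G v) Y : ℝ)) / 2 ^ m := by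
    rw [avgCutRank, ← hm]
  have main : avgCutRank G - ((2 : ℝ) ^ d - 1) / 2 ^ (k + d - 1)
      ≤ avgCutRank (deleteVert G v) := by
    rw [havgG, havgG']
    have hexp : k + d - 1 = t + d := by omega
    rw [hexp]
    have hpos : (0 : ℝ) < 2 ^ (m + 1) := by positivity
    have h2 : (∑ X : Finset V, (cutRank G X : ℝ)) / 2 ^ (m + 1)
        ≤ (2 * (∑ Y : Finset {w : V // w ≠ v}, (cutRank (deleteVert G v) Y : ℝ))
          + 2 * C) / 2 ^ (m + 1) := by
      exact (div_le_div_iff_of_pos_right hpos).2 hSGle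
    have h3 : (2 * (∑ Y : Finset {w : V // w ≠ v}, (cutRank (deleteVert G v) Y : ℝ))
          + 2 * C) / 2 ^ (m + 1)
        = (∑ Y : Finset {w : V // w ≠ v}, (cutRank (deleteVert G v) Y : ℝ)) / 2 ^ m
          + ((2 : ℝ) ^ d - 1) / 2 ^ (t + d) := by
      rw [hCR, hme]
      have e1 : (2 : ℝ) ^ (t + d + e + 1) = 2 ^ t * 2 ^ d * 2 ^ e * 2 := by
        rw [pow_succ, pow_add, pow_add]
      have e2 : (2 : ℝ) ^ (d + e) = 2 ^ d * 2 ^ e := by rw [pow_add]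
      have e3 : (2 : ℝ) ^ (t + d + e) = 2 ^ t * 2 ^ d * 2 ^ e := by rw [pow_add, pow_add]
      have e4 : (2 : ℝ) ^ (t + d) = 2 ^ t * 2 ^ d := by rw [pow_add]
      rw [e1, e2, e3, e4]
      have p1 : (0 : ℝ) < 2 ^ t := by positivity
      have p2 : (0 : ℝ) < 2 ^ d := by positivity
      have p3 : (0 : ℝ) < 2 ^ e := by positivity
      field_simp
    linarith
  refine ⟨main, fun hd1 => ?_⟩
  rw [hd1] at main
  have h5 : ((2 : ℝ) ^ 1 - 1) = 1 := by norm_num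
  have h6 : k + 1 - 1 = k := by omega
  rw [h5, h6, one_div] at main
  exact main

end AvgCutRank
end
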